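/- arXiv:1108.3626 — 7 statements merged into one kernel-verified Lean document; each statement's English description precedes it below -/
import Mathlib

section
/- For every finite alphabet A, the regular language L = ⋃_{a ∈ A} (aa)^+ (all nonempty even-length powers of a single letter) is not (2·|A| − 1, k)-homomorphic for any k ≥ 2; that is, L is not the letterwise homomorphic image of any k-slt language over an alphabet of cardinality 2·|A| − 1. -/
/-- `L` is `k`-strictly locally testable, as defined by the sets `I` (allowed
prefixes of length `k-1`), `T` (allowed suffixes of length `k-1`) and `F`
(allowed factors of length `k`): membership of words of length `< k` is
unconstrained. -/
def IsSLTWith {B : Type} (k : ℕ) (I T F : Set (List B)) (L : Set (List B)) : Prop :=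
  (∀ w ∈ I, w.length = k - 1) ∧ (∀ w ∈ T, w.length = k - 1) ∧ (∀ w ∈ F, w.length = k) ∧
  ∀ x : List B, k ≤ x.length →
    (x ∈ L ↔ x.take (k - 1) ∈ I ∧ x.drop (x.length - (k - 1)) ∈ T ∧
      ∀ y : List B, y.length = k → y <:+: x → y ∈ F)

/-- `L` is `k`-strictly locally testable. -/
def IsSLT {B : Type} (k : ℕ) (L : Set (List B)) : Prop :=
  ∃ I T F, IsSLTWith k I T F L

/-- `L ⊆ A⁺` is `(m,k)`-homomorphic: it is the letterwise homomorphic image of a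
`k`-slt language `L' ⊆ B⁺` over an alphabet `B` of cardinality `m`. -/
def IsHomomorphic {A : Type} (m k : ℕ) (L : Set (List A)) : Prop :=
  ∃ (B : Type) (instB : Fintype B) (L' : Set (List B)) (π : B → A),
    @Fintype.card B instB = m ∧ IsSLT k L' ∧ [] ∉ L' ∧ L = (List.map π) '' L'

/-- For every (nonempty, finite) alphabet `A`, the language
`⋃_{a ∈ A} (aa)⁺` is not `(2|A| - 1, k)`-homomorphic for any `k ≥ 2`. -/
theorem not_homomorphic_of_small_alphabet {A : Type} [Fintype A] [Nonempty A] :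
    ∀ k : ℕ, 2 ≤ k →
      ¬ IsHomomorphic (2 * Fintype.card A - 1) k
        {w : List A | ∃ a : A, ∃ j : ℕ, 1 ≤ j ∧ w = List.replicate (2 * j) a} := by
  classical
  intro k hk h
  obtain ⟨B, instB, L', π, hcard, ⟨I, T, F, hI, hT, hF, hslt⟩, hne, hL⟩ := h
  set L : Set (List A) :=
    {w : List A | ∃ a : A, ∃ j : ℕ, 1 ≤ j ∧ w = List.replicate (2 * j) a} with hLdef
  -- every fiber of π is nonempty
  have hsurj : ∀ a : A, ∃ b : B, π b = a := by
    intro a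
    have hmem : List.replicate (2 * 1) a ∈ L := ⟨a, 1, le_refl _, rfl⟩
    rw [hL] at hmem
    obtain ⟨w, hw, hmap⟩ := hmem
    have hlen : w.length = 2 := by
      have := congrArg List.length hmap
      simpa using this
    obtain ⟨c, hc⟩ : ∃ c, c ∈ w := by
      cases w with
      | nil => simp at hlen
      | cons c t => exact ⟨c, List.mem_cons_self⟩
    refine ⟨c, ?_⟩
    have : π c ∈ List.map π w := List.mem_map_of_mem hc
    rw [hmap] at this
    exact List.eq_of_mem_replicate this
  -- pigeonhole: some fiber is a singleton
  have hA1 : 1 ≤ Fintype.card A := Fintype.card_pos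
  have hfiber : ∃ a : A, ∀ b b' : B, π b = a → π b' = a → b = b' := by
    by_contra hno
    push_neg at hno
    have hsum : (Finset.univ : Finset B).card =
        ∑ a : A, (Finset.univ.filter (fun b => π b = a)).card :=
      Finset.card_eq_sum_card_fiberwise (fun b _ => Finset.mem_univ _)
    have h2 : ∀ a : A, 2 ≤ (Finset.univ.filter (fun b => π b = a)).card := by
      intro a
      obtain ⟨b, b', hb, hb', hbb'⟩ := hno a
      have hsub : ({b, b'} : Finset B) ⊆ Finset.univ.filter (fun b => π b = a) := by
        intro x hx
        simp only [Finset.mem_insert, Finset.mem_singleton] at hx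
        rcases hx with rfl | rfl <;> simp [hb, hb']
      calc 2 = ({b, b'} : Finset B).card := (Finset.card_pair hbb').symm
        _ ≤ _ := Finset.card_le_card hsub
    have hge : 2 * Fintype.card A ≤ (Finset.univ : Finset B).card := by
      rw [hsum]
      calc 2 * Fintype.card A = ∑ _a : A, 2 := by
            rw [Finset.sum_const, smul_eq_mul, Finset.card_univ, mul_comm]
        _ ≤ _ := Finset.sum_le_sum (fun a _ => h2 a)
    have : (Finset.univ : Finset B).card = 2 * Fintype.card A - 1 := by
      rw [Finset.card_univ]; exact hcard
    omega
  obtain ⟨a, ha⟩ := hfiber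
  obtain ⟨b, hb⟩ := hsurj a
  -- all even powers of b are in L'
  have hrep : ∀ n : ℕ, 1 ≤ n → List.replicate (2 * n) b ∈ L' := by
    intro n hn
    have hmem : List.replicate (2 * n) a ∈ L := ⟨a, n, hn, rfl⟩
    rw [hL] at hmem
    obtain ⟨w, hw, hmap⟩ := hmem
    have hwlen : w.length = 2 * n := by
      have := congrArg List.length hmap
      simpa using this
    have hwb : w = List.replicate (2 * n) b := by
      rw [List.eq_replicate_iff]
      refine ⟨hwlen, fun c hc => ?_⟩
      have : π c ∈ List.map π w := List.mem_map_of_mem hc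
      rw [hmap] at this
      exact ha c b (List.eq_of_mem_replicate this) hb
    rw [← hwb]; exact hw
  -- infixes of replicates are replicates
  have hinf : ∀ (n : ℕ) (y : List B), y <:+: List.replicate n b →
      y = List.replicate y.length b := by
    intro n y hy
    rw [List.eq_replicate_iff]
    refine ⟨rfl, fun c hc => ?_⟩
    exact List.eq_of_mem_replicate (hy.sublist.subset hc)
  -- use slt on b^{2k}
  have hx : List.replicate (2 * k) b ∈ L' := hrep k (by omega)
  have hxlen : (List.replicate (2 * k) b).length = 2 * k := List.length_replicate
  obtain ⟨hI', hT', hF'⟩ :=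
    (hslt (List.replicate (2 * k) b) (by rw [hxlen]; omega)).mp hx
  have hIb : List.replicate (k - 1) b ∈ I := by
    rw [List.take_replicate] at hI'
    have : min (k - 1) (2 * k) = k - 1 := by omega
    rwa [this] at hI'
  have hTb : List.replicate (k - 1) b ∈ T := by
    rw [hxlen, List.drop_replicate] at hT'
    have : 2 * k - (2 * k - (k - 1)) = k - 1 := by omega
    rwa [this] at hT'
  have hFb : List.replicate k b ∈ F := by
    apply hF' _ (List.length_replicate)
    refine ⟨[], List.replicate k b, ?_⟩
    rw [List.nil_append, ← List.replicate_add]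
    congr 1; omega
  -- deduce b^{2k+1} ∈ L'
  have hx' : List.replicate (2 * k + 1) b ∈ L' := by
    have hlen' : (List.replicate (2 * k + 1) b).length = 2 * k + 1 :=
      List.length_replicate
    rw [hslt (List.replicate (2 * k + 1) b) (by rw [hlen']; omega)]
    refine ⟨?_, ?_, ?_⟩
    · rw [List.take_replicate]
      have : min (k - 1) (2 * k + 1) = k - 1 := by omega
      rwa [this]
    · rw [hlen', List.drop_replicate]
      have : 2 * k + 1 - (2 * k + 1 - (k - 1)) = k - 1 := by omega
      rwa [this]
    · intro y hy hyinf
      have := hinf _ _ hyinf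
      rw [hy] at this
      rwa [this]
  -- contradiction: a^{2k+1} ∈ L with odd length
  have : List.map π (List.replicate (2 * k + 1) b) ∈ L := by
    rw [hL]; exact ⟨_, hx', rfl⟩
  rw [List.map_replicate, hb] at this
  obtain ⟨a', j, hj, heq⟩ := this
  have := congrArg List.length heq
  simp at this
  omega
end

section
/- For every finite alphabet A, the regular language L = ⋃_{a ∈ A} (aa)^+ (all nonempty even-length powers of a single letter) is not the letterwise homomorphic image of any k-locally testable language over an alphabet of cardinality 2·|A| − 1, for any k ≥ 2: for every alphabet B with |B| = 2·|A| − 1, every k ≥ 2, every k-locally testable L' ⊆ B^+, and every map π : B → A extended letterwise to words, π(L') ≠ L. -/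
/-- `L'` is `k`-locally testable: membership of words of length `≥ k` depends
only on the prefix of length `k-1`, the suffix of length `k-1`, and the set of
factors of length `k`. -/
def IsLocallyTestable {B : Type} (k : ℕ) (L : Set (List B)) : Prop :=
  ∀ x y : List B, k ≤ x.length → k ≤ y.length →
    x.take (k - 1) = y.take (k - 1) →
    x.drop (x.length - (k - 1)) = y.drop (y.length - (k - 1)) →
    (∀ w : List B, w.length = k → (w <:+: x ↔ w <:+: y)) →
    (x ∈ L ↔ y ∈ L)

lemma infix_replicate_eq {B : Type} {b : B} {n : ℕ} {w : List B}
    (h : w <:+: List.replicate n b) : w = List.replicate w.length b :=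
  List.eq_replicate_iff.mpr ⟨rfl, fun x hx => List.eq_of_mem_replicate (h.subset hx)⟩

lemma replicate_infix {B : Type} (b : B) {m n : ℕ} (h : m ≤ n) :
    List.replicate m b <:+: List.replicate n b := by
  refine List.IsPrefix.isInfix ⟨List.replicate (n - m) b, ?_⟩
  rw [← List.replicate_add]
  congr 1
  omega

/-- For every (nonempty, finite) alphabet `A`, the language
`⋃_{a ∈ A} (aa)⁺` is not the letterwise homomorphic image of any `k`-locally
testable language over an alphabet of cardinality `2|A| - 1`, for any `k ≥ 2`. -/
theorem not_image_of_locally_testable {A : Type} [Fintype A] [Nonempty A] :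
    ∀ (B : Type) (instB : Fintype B), @Fintype.card B instB = 2 * Fintype.card A - 1 →
      ∀ k : ℕ, 2 ≤ k → ∀ L' : Set (List B), IsLocallyTestable k L' → [] ∉ L' →
        ∀ π : B → A,
          (List.map π) '' L' ≠
            {w : List A | ∃ a : A, ∃ j : ℕ, 1 ≤ j ∧ w = List.replicate (2 * j) a} := by
  classical
  intro B instB hcard k hk L' hLT hnil π himg
  -- pigeonhole: some fiber has at most one element
  have hpig : ∃ a : A, (Finset.univ.filter fun b => π b = a).card ≤ 1 := by
    by_contra hfib
    push_neg at hfib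
    have hsum : (Finset.univ : Finset B).card =
        ∑ a : A, (Finset.univ.filter fun b => π b = a).card :=
      Finset.card_eq_sum_card_fiberwise (fun x _ => Finset.mem_univ (π x))
    have h2 : 2 * Fintype.card A ≤ Fintype.card B := by
      calc 2 * Fintype.card A = ∑ _a : A, 2 := by
            rw [Finset.sum_const, smul_eq_mul, Finset.card_univ]; ring
        _ ≤ ∑ a : A, (Finset.univ.filter fun b => π b = a).card :=
            Finset.sum_le_sum (fun a _ => hfib a)
        _ = Fintype.card B := hsum.symm
    have hA : 1 ≤ Fintype.card A := Fintype.card_pos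
    omega
  obtain ⟨a, ha⟩ := hpig
  interval_cases h : (Finset.univ.filter fun b => π b = a).card
  · -- empty fiber
    have hempty : (Finset.univ.filter fun b => π b = a) = ∅ := Finset.card_eq_zero.mp h
    have hno : ∀ b : B, π b ≠ a := by
      intro b hb
      have : b ∈ (Finset.univ.filter fun b => π b = a) := by
        simp [hb]
      rw [hempty] at this
      exact absurd this (Finset.notMem_empty b)
    have hmem : List.replicate 2 a ∈
        {w : List A | ∃ a : A, ∃ j : ℕ, 1 ≤ j ∧ w = List.replicate (2 * j) a} :=
      ⟨a, 1, le_refl 1, by norm_num⟩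
    rw [← himg] at hmem
    obtain ⟨w, _, hw⟩ := hmem
    have hne : w ≠ [] := by
      intro hwe
      rw [hwe] at hw
      simp at hw
    obtain ⟨x, t, rfl⟩ := List.exists_cons_of_ne_nil hne
    have : π x = a := by
      have := congrArg (fun l => l.head?) hw
      simpa using this
    exact hno x this
  · -- singleton fiber {b}
    obtain ⟨b, hb⟩ := Finset.card_eq_one.mp h
    have hmemb : ∀ x : B, π x = a ↔ x = b := by
      intro x
      constructor
      · intro hx
        have : x ∈ (Finset.univ.filter fun b => π b = a) := by simp [hx]
        rw [hb] at this
        exact Finset.mem_singleton.mp this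
      · intro hxb
        rw [hxb]
        have : b ∈ (Finset.univ.filter fun c => π c = a) := by
          rw [hb]; exact Finset.mem_singleton_self b
        simpa using this
    -- any preimage of replicate n a is replicate n b
    have key : ∀ (n : ℕ) (w : List B), List.map π w = List.replicate n a →
        w = List.replicate n b := by
      intro n w hw
      refine List.eq_replicate_iff.mpr ⟨?_, fun x hx => ?_⟩
      · have := congrArg List.length hw
        simpa using this
      · have : π x ∈ List.map π w := List.mem_map_of_mem (f := π) hx
        rw [hw] at this
        exact (hmemb x).mp (List.eq_of_mem_replicate this)
    -- b^{2k} ∈ L'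
    have hx : List.replicate (2 * k) b ∈ L' := by
      have hmem : List.replicate (2 * k) a ∈
          {w : List A | ∃ a : A, ∃ j : ℕ, 1 ≤ j ∧ w = List.replicate (2 * j) a} :=
        ⟨a, k, by omega, rfl⟩
      rw [← himg] at hmem
      obtain ⟨w, hwL, hw⟩ := hmem
      rwa [key (2 * k) w hw] at hwL
    -- b^{2k+1} ∉ L'
    have hy : List.replicate (2 * k + 1) b ∉ L' := by
      intro hmem
      have : List.map π (List.replicate (2 * k + 1) b) ∈
          {w : List A | ∃ a : A, ∃ j : ℕ, 1 ≤ j ∧ w = List.replicate (2 * j) a} := by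
        rw [← himg]
        exact ⟨_, hmem, rfl⟩
      rw [List.map_replicate, (hmemb b).mpr rfl] at this
      obtain ⟨a', j, hj, heq⟩ := this
      have := congrArg List.length heq
      simp at this
      omega
    -- local testability contradiction
    have hiff := hLT (List.replicate (2 * k) b) (List.replicate (2 * k + 1) b)
      (by simp; omega) (by simp; omega)
      (by rw [List.take_replicate, List.take_replicate]; congr 1; omega)
      (by simp only [List.length_replicate, List.drop_replicate]; congr 1; omega)
      (by
        intro w hw
        constructor
        · intro hinf
          have := infix_replicate_eq hinf
          rw [this, hw]
          exact replicate_infix b (by omega)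
        · intro hinf
          have := infix_replicate_eq hinf
          rw [this, hw]
          exact replicate_infix b (by omega))
    exact hy (hiff.mp hx)
end

section
/- Every regular language L ⊆ A^+ (not containing the empty word) over a finite alphabet A is (2·|A|, k)-homomorphic for some integer k ≥ 2: there exist an alphabet B of cardinality exactly 2·|A|, an integer k ≥ 2, a k-slt language L' ⊆ B^+, and a map π : B → A extended letterwise to words, with π(L') = L. -/
/-- A (nonempty) path of the NFA with transition relation `E`: a nonempty list of
transitions, all in `E`, which are pairwise consecutive. -/
def IsPath {Q A : Type} (E : Set (Q × A × Q)) (η : List (Q × A × Q)) : Prop :=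
  η ≠ [] ∧ (∀ e ∈ η, e ∈ E) ∧ List.Chain' (fun e f => e.2.2 = f.1) η

/-- The origin of a path (as an `Option`, `none` for the empty path). -/
def origState {Q A : Type} (η : List (Q × A × Q)) : Option Q := η.head?.map (fun e => e.1)

/-- The end of a path (as an `Option`, `none` for the empty path). -/
def endState {Q A : Type} (η : List (Q × A × Q)) : Option Q := η.getLast?.map (fun e => e.2.2)

/-- The label of a path. -/
def pathLabel {Q A : Type} (η : List (Q × A × Q)) : List A := η.map (fun e => e.2.1)

/-- The language of the NFA `(Q, A, E, q₀, F)`: labels of paths from `q₀` to a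
final state. -/
def nfaLang {Q A : Type} (E : Set (Q × A × Q)) (q0 : Q) (F : Set Q) : Set (List A) :=
  {w | ∃ η, IsPath E η ∧ origState η = some q0 ∧ (∃ q ∈ F, endState η = some q) ∧
    w = pathLabel η}

/-- The transition relation `E` is total. -/
def TotalRel {Q A : Type} (E : Set (Q × A × Q)) : Prop := ∀ q a, ∃ p, (q, a, p) ∈ E

/-- `L` is regular: it is recognized by some nondeterministic finite automaton. -/
def RegularLang {A : Type} (L : Set (List A)) : Prop :=
  ∃ (Q : Type) (E : Set (Q × A × Q)) (q0 : Q) (F : Set Q),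
    Finite Q ∧ q0 ∉ F ∧ L = nfaLang E q0 F

namespace SLT4

/-- local bit pattern at offset `u` within a block whose state has index `s`. -/
def pat (s u : ℕ) : Bool := u == 0 || u == 1 + s

/-- the bit at absolute position `p`. -/
def bitf (t : ℕ) (f : ℕ → ℕ) (p : ℕ) : Bool := pat (f (p / t * t)) (p % t)

/-- encoding of a word `w` with state-index function `f`. -/
def enc {A : Type} (t : ℕ) (f : ℕ → ℕ) (w : List A) : List (A × Bool) :=
  w.zip ((List.range w.length).map (bitf t f))

lemma length_enc {A : Type} (t : ℕ) (f : ℕ → ℕ) (w : List A) :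
    (enc t f w).length = w.length := by
  simp [enc]

lemma enc_getElem? {A : Type} (t : ℕ) (f : ℕ → ℕ) (w : List A) {i : ℕ}
    (h : i < w.length) : (enc t f w)[i]? = some (w[i], bitf t f i) := by
  have hl : i < (enc t f w).length := by rw [length_enc]; exact h
  rw [List.getElem?_eq_getElem hl]
  congr 1
  simp [enc, List.getElem_zip]

lemma map_fst_enc {A : Type} (t : ℕ) (f : ℕ → ℕ) (w : List A) :
    (enc t f w).map Prod.fst = w := by
  apply List.map_fst_zip
  simp

lemma bitf_of_mod_eq_zero {t : ℕ} {f : ℕ → ℕ} {p : ℕ} (hp : p % t = 0) :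
    bitf t f p = true := by
  simp [bitf, pat, hp]

lemma bitf_add {n t : ℕ} (ht : t = 2 * n + 1) {f : ℕ → ℕ} {p u : ℕ}
    (hp : p % t = 0) (hu : u ≤ n) : bitf t f (p + u) = pat (f p) u := by
  have h0 : 0 < t := by omega
  obtain ⟨a, rfl⟩ := Nat.dvd_of_mod_eq_zero hp
  have h1 : (t * a + u) % t = u := by
    rw [Nat.mul_add_mod]; exact Nat.mod_eq_of_lt (by omega)
  have h2 : (t * a + u) / t = a := by
    rw [Nat.mul_add_div h0]
    have : u / t = 0 := Nat.div_eq_of_lt (by omega)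
    omega
  unfold bitf
  rw [h1, h2, Nat.mul_comm a t]

lemma bitf_back {n t : ℕ} (ht : t = 2 * n + 1) {f : ℕ → ℕ} (hf : ∀ p, f p < n)
    {p u : ℕ} (hp : p % t = 0) (htp : t ≤ p) (hu1 : 1 ≤ u) (hun : u ≤ n) :
    bitf t f (p - u) = false := by
  have h0 : 0 < t := by omega
  obtain ⟨a, rfl⟩ := Nat.dvd_of_mod_eq_zero hp
  have ha : 1 ≤ a := by
    rcases Nat.eq_zero_or_pos a with h | h
    · subst h; omega
    · exact h
  have key : t * a - u = t * (a - 1) + (t - u) := by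
    have h2 : t * a = t * (a - 1) + t := by
      calc t * a = t * ((a - 1) + 1) := by rw [Nat.sub_add_cancel ha]
      _ = t * (a - 1) + t := by ring
    omega
  have h1 : (t * a - u) % t = t - u := by
    rw [key, Nat.mul_add_mod]; exact Nat.mod_eq_of_lt (by omega)
  have hfx := hf ((t * a - u) / t * t)
  unfold bitf
  rw [h1]
  simp only [pat, Bool.or_eq_false_iff, beq_eq_false_iff_ne, ne_eq]
  omega

lemma blockstart {n t : ℕ} (ht : t = 2 * n + 1) {f : ℕ → ℕ} (hf : ∀ p, f p < n)
    {p : ℕ} (hb : bitf t f p = true)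
    (hz : ∀ u, 1 ≤ u → u ≤ n → bitf t f (p - u) = false) : p % t = 0 := by
  by_contra h
  have hs := hf (p / t * t)
  have hr : p % t = 1 + f (p / t * t) := by
    simp only [bitf, pat, Bool.or_eq_true, beq_iff_eq] at hb
    rcases hb with h1 | h1
    · exact absurd h1 h
    · exact h1
  have h3 := hz (p % t) (by omega) (by omega)
  have h4 : (p - p % t) % t = 0 := by
    have hd := Nat.div_add_mod p t
    have he : p - p % t = t * (p / t) := by omega
    rw [he]; exact Nat.mul_mod_right t _
  rw [bitf_of_mod_eq_zero h4] at h3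
  exact absurd h3 (by simp)

lemma pat_inj {n s1 s2 : ℕ} (h1 : s1 < n) (h2 : s2 < n)
    (h : ∀ u, u ≤ n → pat s1 u = pat s2 u) : s1 = s2 := by
  have h3 := h (1 + s1) (by omega)
  simp only [pat] at h3
  have h5 : (1 + s1 == 0 || 1 + s1 == 1 + s2) = true := by
    rw [← h3]; simp
  simp only [Bool.or_eq_true, beq_iff_eq] at h5
  omega


section nfa
variable {A Q : Type} (E : Set (Q × A × Q)) (q0 : Q) (Fs : Set Q)

/-- The encodings of accepted words together with runs. -/
def Enc (t : ℕ) (idx : Q → ℕ) : Set (List (A × Bool)) :=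
  {x | ∃ (w : List A) (σ : ℕ → Q), x = enc t (fun p => idx (σ p)) w ∧
        σ 0 = q0 ∧ σ w.length ∈ Fs ∧
        ∀ i, (h : i < w.length) → (σ i, w[i], σ (i + 1)) ∈ E}

lemma run_path (w : List A) (σ : ℕ → Q) (hw : w ≠ [])
    (hstep : ∀ i, (h : i < w.length) → (σ i, w[i], σ (i + 1)) ∈ E) :
    ∃ η, IsPath E η ∧ origState η = some (σ 0) ∧
      endState η = some (σ w.length) ∧ pathLabel η = w := by
  induction w generalizing σ with
  | nil => exact absurd rfl hw
  | cons a w' ih =>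
    by_cases hw' : w' = []
    · subst hw'
      refine ⟨[(σ 0, a, σ 1)], ⟨by simp, ?_, List.isChain_singleton _⟩, by simp [origState],
        by simp [endState], by simp [pathLabel]⟩
      intro e he
      simp at he
      subst he
      exact hstep 0 (by simp)
    · obtain ⟨η', ⟨hne, hmem, hch⟩, horig, hend, hlab⟩ :=
        ih (fun i => σ (i + 1)) hw' (fun i h => by
          have := hstep (i + 1) (by simp; omega)
          simpa using this)
      refine ⟨(σ 0, a, σ 1) :: η', ⟨by simp, ?_, ?_⟩, ?_, ?_, ?_⟩
      · intro e he
        rcases List.mem_cons.mp he with h | h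
        · subst h; exact hstep 0 (by simp)
        · exact hmem e h
      · apply List.IsChain.cons hch
        intro y hy
        have : η'.head?.map (fun e => e.1) = some (σ 1) := horig
        rw [hy] at this
        simp at this
        simp [this]
      · simp [origState]
      · cases η' with
        | nil => exact absurd rfl hne
        | cons b l =>
          have h9 : endState ((σ 0, a, σ 1) :: b :: l) = endState (b :: l) := by
            simp only [endState, List.getLast?_cons_cons]
          rw [h9, hend]
          simp
      · simp [pathLabel] at hlab ⊢
        exact hlab

lemma run_mem (w : List A) (σ : ℕ → Q) (hw : w ≠ []) (h0 : σ 0 = q0)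
    (hF : σ w.length ∈ Fs)
    (hstep : ∀ i, (h : i < w.length) → (σ i, w[i], σ (i + 1)) ∈ E) :
    w ∈ nfaLang E q0 Fs := by
  obtain ⟨η, hp, ho, he, hl⟩ := run_path E w σ hw hstep
  exact ⟨η, hp, by rw [ho, h0], ⟨σ w.length, hF, he⟩, hl.symm⟩

lemma mem_run {w : List A} (hmem : w ∈ nfaLang E q0 Fs) :
    ∃ σ : ℕ → Q, w ≠ [] ∧ σ 0 = q0 ∧ σ w.length ∈ Fs ∧
      ∀ i, (h : i < w.length) → (σ i, w[i], σ (i + 1)) ∈ E := by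
  obtain ⟨η, ⟨hne, hmemE, hch⟩, horig, ⟨qf, hqf, hend⟩, hw⟩ := hmem
  subst hw
  have hlen : (pathLabel η).length = η.length := by simp [pathLabel]
  have hηpos : 0 < η.length := List.length_pos_iff.mpr hne
  refine ⟨fun i => if i = 0 then q0 else (η[i-1]?.map (fun e => e.2.2)).getD q0,
    by simp [pathLabel]; exact hne, by simp, ?_, ?_⟩
  · rw [hlen]
    simp only [if_neg (by omega : ¬ η.length = 0)]
    have : η.getLast? = η[η.length - 1]? := List.getLast?_eq_getElem?
    rw [endState, this] at hend
    rcases hx : η[η.length - 1]? with _ | e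
    · rw [hx] at hend; simp at hend
    · rw [hx] at hend
      simp at hend
      simp [hx, hend]
      exact hqf
  · intro i h
    rw [hlen] at h
    have hnth : η[i]? = some (η[i]'h) := List.getElem?_eq_getElem h
    have hwi' : (pathLabel η)[i]? = some ((η[i]'h).2.1) := by
      unfold pathLabel
      rw [List.getElem?_map, hnth]
      rfl
    have hwi : (pathLabel η)[i]'(by rwa [hlen]) = (η[i]'h).2.1 := by
      have h' : i < (pathLabel η).length := by rwa [hlen]
      have h'' := List.getElem?_eq_getElem h'
      rw [hwi'] at h''
      exact (Option.some.inj h'').symm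
    have h2 : (if i + 1 = 0 then q0 else (η[i+1-1]?.map (fun e => e.2.2)).getD q0)
        = (η[i]'h).2.2 := by
      simp [hnth]
    have h1 : (if i = 0 then q0 else (η[i-1]?.map (fun e => e.2.2)).getD q0)
        = (η[i]'h).1 := by
      rcases Nat.eq_zero_or_pos i with h0' | h0'
    
      · subst h0'
        simp only [if_pos rfl]
        have : η.head? = η[0]? := (List.head?_eq_getElem?)
        rw [origState, this, List.getElem?_eq_getElem h] at horig
        simp at horig
        exact horig.symm
      · simp only [if_neg (by omega : ¬ i = 0)]
        have hi1 : i - 1 + 1 = i := by omega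
        have hch' := List.isChain_iff_getElem.mp hch (i-1) (by omega)
        simp only [List.get_eq_getElem, hi1] at hch'
        rw [List.getElem?_eq_getElem (by omega : i - 1 < η.length)]
        exact hch'
    rw [hwi]
    dsimp only
    rw [h1, h2]
    exact hmemE _ (List.getElem_mem h)

end nfa

section glue
variable {A Q : Type} (E : Set (Q × A × Q)) (q0 : Q) (Fs : Set Q)

lemma encSpec {t : ℕ} {idx : Q → ℕ} {z : List (A × Bool)}
    (hz : z ∈ Enc E q0 Fs t idx) :
    ∃ σ : ℕ → Q, σ 0 = q0 ∧ σ z.length ∈ Fs ∧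
      ∀ i b, z[i]? = some b →
        b.2 = bitf t (fun p => idx (σ p)) i ∧ (σ i, b.1, σ (i + 1)) ∈ E := by
  obtain ⟨w, σ, rfl, h0, hF, hstep⟩ := hz
  refine ⟨σ, h0, by rwa [length_enc], ?_⟩
  intro i b hb
  have hi : i < w.length := by
    have h2 : i < (enc _ _ w).length := (List.getElem?_eq_some_iff.mp hb).1
    rwa [length_enc] at h2
  rw [enc_getElem? _ _ _ hi] at hb
  obtain rfl := Option.some.inj hb.symm
  exact ⟨rfl, hstep i hi⟩

lemma extend {n t : ℕ} (hn : 1 ≤ n) (ht : t = 2 * n + 1)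
    {idx : Q → ℕ} (hidx : ∀ q, idx q < n) (hinj : Function.Injective idx)
    (x z : List (A × Bool)) (σz : ℕ → Q)
    (hzbits : ∀ i b, z[i]? = some b → b.2 = bitf t (fun p => idx (σz p)) i)
    (σ : ℕ → Q) (c q d l i₀ : ℕ)
    (Agr : ∀ i, i < l → x[q + i]? = z[d + i]?)
    (hc : c = q + i₀) (hi0 : n ≤ i₀) (hl : i₀ + n < l) (hcm : c + n < x.length)
    (A1 : ∀ u, u ≤ n → ∀ b, x[c + u]? = some b → b.2 = pat (idx (σ c)) u)
    (A2 : ∀ u, 1 ≤ u → u ≤ n → ∀ b, x[c - u]? = some b → b.2 = false) :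
    (d + i₀) % t = 0 ∧ σz (d + i₀) = σ c := by
  set f : ℕ → ℕ := fun p => idx (σz p) with hfdef
  have hf : ∀ p, f p < n := fun p => hidx _
  have hbit2 : ∀ j, q ≤ j → j < q + l → ∀ b, x[j]? = some b →
      b.2 = bitf t f (d + (j - q)) := by
    intro j h1 h2 b hb
    have hz' : z[d + (j - q)]? = some b := by
      rw [← Agr (j - q) (by omega)]
      have e0 : q + (j - q) = j := by omega
      rw [e0]; exact hb
    exact hzbits _ _ hz'
  have hxc : x[c]? = some (x[c]'(by omega)) := List.getElem?_eq_getElem _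
  have htrue : bitf t f (d + i₀) = true := by
    have hb := hbit2 c (by omega) (by omega) _ hxc
    have e1 : d + (c - q) = d + i₀ := by omega
    rw [e1] at hb
    rw [← hb]
    have hA := A1 0 (by omega) (x[c]'(by omega)) (by simpa using hxc)
    rw [hA]
    rfl
  have hfalse : ∀ u, 1 ≤ u → u ≤ n → bitf t f (d + i₀ - u) = false := by
    intro u h1 h2
    have hcu : c - u < x.length := by omega
    have hx : x[c - u]? = some (x[c-u]'hcu) := List.getElem?_eq_getElem _
    have hb := hbit2 (c - u) (by omega) (by omega) _ hx
    have e1 : d + (c - u - q) = d + i₀ - u := by omega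
    rw [e1] at hb
    rw [← hb]
    exact A2 u h1 h2 _ hx
  have hmod : (d + i₀) % t = 0 := blockstart ht hf htrue hfalse
  have hdec : ∀ u, u ≤ n → pat (f (d + i₀)) u = pat (idx (σ c)) u := by
    intro u hu
    have hcu : c + u < x.length := by omega
    have hx : x[c + u]? = some (x[c+u]'hcu) := List.getElem?_eq_getElem _
    have hb := hbit2 (c + u) (by omega) (by omega) _ hx
    have e1 : d + (c + u - q) = (d + i₀) + u := by omega
    rw [e1, bitf_add ht hmod hu] at hb
    rw [← hb]
    exact A1 u hu _ hx
  have hff : f (d + i₀) = idx (σ c) := pat_inj (hf _) (hidx _) hdec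
  exact ⟨hmod, hinj hff⟩

lemma glue {n t k : ℕ} (hn : 1 ≤ n) (ht : t = 2 * n + 1) (hk : k = 4 * t)
    {idx : Q → ℕ} (hidx : ∀ q, idx q < n) (hinj : Function.Injective idx)
    (x : List (A × Bool)) (hm : k ≤ x.length)
    (hI : ∃ x₁ ∈ Enc E q0 Fs t idx, k ≤ x₁.length ∧ x₁.take (k-1) = x.take (k-1))
    (hT : ∃ x₂ ∈ Enc E q0 Fs t idx, k ≤ x₂.length ∧
        x₂.drop (x₂.length - (k-1)) = x.drop (x.length - (k-1)))
    (hF : ∀ y : List (A × Bool), y.length = k → y <:+: x →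
        ∃ z ∈ Enc E q0 Fs t idx, y <:+: z) :
    ∃ σ : ℕ → Q, σ 0 = q0 ∧ σ x.length ∈ Fs ∧
      ∀ i b, x[i]? = some b → (σ i, b.1, σ (i + 1)) ∈ E := by
  obtain ⟨x₁, hx₁E, hx₁len, hx₁take⟩ := hI
  obtain ⟨σ₁, hσ₁0, hσ₁F, hσ₁spec⟩ := encSpec E q0 Fs hx₁E
  have hagr1 : ∀ i, i < k - 1 → x[i]? = x₁[i]? := by
    intro i hi
    have h1 : (x.take (k-1))[i]? = x[i]? := by rw [List.getElem?_take, if_pos hi]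
    have h2 : (x₁.take (k-1))[i]? = x₁[i]? := by rw [List.getElem?_take, if_pos hi]
    rw [← h1, ← h2, hx₁take]
  have key : ∀ j, j * t + n + 1 ≤ x.length → ∃ σ : ℕ → Q, σ 0 = q0 ∧
      (∀ i b, i < j * t → x[i]? = some b → (σ i, b.1, σ (i+1)) ∈ E) ∧
      (∀ u, u ≤ n → ∀ b, x[j * t + u]? = some b → b.2 = pat (idx (σ (j * t))) u) ∧
      (1 ≤ j → ∀ u, 1 ≤ u → u ≤ n → ∀ b, x[j * t - u]? = some b → b.2 = false) := by
    intro j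
    induction j using Nat.strong_induction_on with
    | _ j IH =>
    intro hjm
    by_cases hbase : j * t + n + 1 ≤ k - 1
    · refine ⟨σ₁, hσ₁0, ?_, ?_, ?_⟩
      · intro i b hij hib
        exact (hσ₁spec i b (by rw [← hagr1 i (by omega)]; exact hib)).2
      · intro u hu b hb
        have hb1 : x₁[j * t + u]? = some b := by
          rw [← hagr1 _ (by omega)]; exact hb
        rw [(hσ₁spec _ b hb1).1, bitf_add ht (Nat.mul_mod_left j t) hu]
      · intro hj u h1 h2 b hb
        have hjt : t ≤ j * t := by
          calc t = 1 * t := (one_mul t).symm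
          _ ≤ j * t := Nat.mul_le_mul_right t hj
        have hb1 : x₁[j * t - u]? = some b := by
          rw [← hagr1 _ (by omega)]; exact hb
        rw [(hσ₁spec _ b hb1).1]
        exact bitf_back ht (fun p => hidx _) (Nat.mul_mod_left j t) hjt h1 h2
    · -- step case
      have hjt_big : k ≤ j * t + n + 1 := by omega
      have hj1 : 1 ≤ j := by
        by_contra h
        have h0 : j = 0 := by omega
        rw [h0, Nat.zero_mul] at hjt_big
        omega
      obtain ⟨j', rfl⟩ : ∃ j', j = j' + 1 := ⟨j - 1, by omega⟩
      have hjt : (j' + 1) * t = j' * t + t := Nat.succ_mul j' t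
      rw [hjt] at hjm hjt_big
      have hj'1 : 1 ≤ j' := by
        by_contra h
        have h0 : j' = 0 := by omega
        rw [h0, Nat.zero_mul] at hjt_big
        omega
      have hj't : t ≤ j' * t := by
        calc t = 1 * t := (one_mul t).symm
        _ ≤ j' * t := Nat.mul_le_mul_right t hj'1
      obtain ⟨σ, hσ0, htrans, hbits, hneg⟩ := IH j' (by omega) (by omega)
      set p := j' * t + t + n + 1 - k with hpdef
      have hpk : p + k = j' * t + t + n + 1 := by omega
      set i₀ := k - t - n - 1 with hi₀def
      have hpc : p + i₀ = j' * t := by omega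
      set y := (x.drop p).take k with hydef
      have hylen : y.length = k := by
        rw [hydef, List.length_take, List.length_drop]
        omega
      have hyinf : y <:+: x :=
        (List.take_prefix k (x.drop p)).isInfix.trans (List.drop_suffix p x).isInfix
      obtain ⟨z, hzE, hyz⟩ := hF y hylen hyinf
      obtain ⟨σz, hσz0, hσzF, hσzspec⟩ := encSpec E q0 Fs hzE
      obtain ⟨s, s', hss'⟩ := hyz
      have hss2 : z = s ++ (y ++ s') := by rw [← hss', List.append_assoc]
      set d := s.length with hddef
      have Agr : ∀ i, i < k → x[p + i]? = z[d + i]? := by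
        intro i hi
        have h1 : x[p + i]? = y[i]? := by
          rw [hydef, List.getElem?_take, if_pos hi, List.getElem?_drop]
        have h2 : z[d + i]? = y[i]? := by
          rw [hss2, List.getElem?_append_right (by omega : s.length ≤ d + i)]
          have e0 : d + i - s.length = i := by omega
          rw [e0, List.getElem?_append_left (by omega : i < y.length)]
        rw [h1, ← h2]
      have hEXT := extend hn ht hidx hinj x z σz
          (fun i b hb => (hσzspec i b hb).1) σ (j' * t) p d k i₀ Agr
          (by omega) (by omega) (by omega) (by omega) hbits (hneg hj'1)
      obtain ⟨hDmod, hDσ⟩ := hEXT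
      set D := d + i₀ with hDdef
      set σ' : ℕ → Q := fun i => if i ≤ j' * t then σ i else σz (D + (i - j' * t))
        with hσ'def
      have hσ'lt : ∀ i, i ≤ j' * t → σ' i = σ i := by
        intro i h; simp only [hσ'def, if_pos h]
      have hσ'c : ∀ i, j' * t ≤ i → σ' i = σz (D + (i - j' * t)) := by
        intro i hci
        by_cases h : i ≤ j' * t
        · have he : i = j' * t := le_antisymm h hci
          subst he
          simp only [hσ'def, if_pos (le_refl _), Nat.sub_self, Nat.add_zero]
          exact hDσ.symm
        · simp only [hσ'def, if_neg h]
      have hDt : (D + t) % t = 0 := by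
        rw [Nat.add_mod, hDmod, Nat.mod_self]
        simp
      refine ⟨σ', by rw [hσ'lt 0 (by omega)]; exact hσ0, ?_, ?_, ?_⟩
      · intro i b hij hib
        rw [hjt] at hij
        by_cases hic : i < j' * t
        · rw [hσ'lt i (by omega), hσ'lt (i+1) (by omega)]
          exact htrans i b hic hib
        · push_neg at hic
          rw [hσ'c i hic, hσ'c (i+1) (by omega)]
          have hzi : z[d + (i₀ + (i - j' * t))]? = some b := by
            rw [← Agr _ (by omega : i₀ + (i - j' * t) < k),
              (by omega : p + (i₀ + (i - j' * t)) = i)]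
            exact hib
          have htr := (hσzspec _ b hzi).2
          rw [(by omega : d + (i₀ + (i - j' * t)) + 1 = D + (i + 1 - j' * t)),
            (by omega : d + (i₀ + (i - j' * t)) = D + (i - j' * t))] at htr
          exact htr
      · intro u hu b hb
        rw [hjt] at hb ⊢
        have hzi : z[d + (i₀ + t + u)]? = some b := by
          rw [← Agr _ (by omega : i₀ + t + u < k),
            (by omega : p + (i₀ + t + u) = j' * t + t + u)]
          exact hb
        have hb2 := (hσzspec _ b hzi).1
        rw [(by omega : d + (i₀ + t + u) = (D + t) + u),
          bitf_add ht hDt hu] at hb2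
        rw [hb2]
        have he : σ' (j' * t + t) = σz (D + t) := by
          rw [hσ'c _ (by omega)]
          congr 1
          omega
        rw [he]
      · intro _ u h1 h2 b hb
        rw [hjt] at hb
        have hzi : z[d + (i₀ + t - u)]? = some b := by
          rw [← Agr _ (by omega : i₀ + t - u < k),
            (by omega : p + (i₀ + t - u) = j' * t + t - u)]
          exact hb
        have hb2 := (hσzspec _ b hzi).1
        rw [(by omega : d + (i₀ + t - u) = (D + t) - u)] at hb2
        rw [hb2]
        exact bitf_back ht (fun p => hidx _) hDt (by omega) h1 h2
  -- conclusion using the suffix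
  set m := x.length with hmdef
  have h0t : 0 < t := by omega
  set J := Nat.findGreatest (fun J => J * t + n + 1 ≤ m) m with hJdef
  have hP0 : 0 * t + n + 1 ≤ m := by rw [Nat.zero_mul]; omega
  have hJ1 : J * t + n + 1 ≤ m := Nat.findGreatest_spec (P := fun J => J * t + n + 1 ≤ m) (Nat.zero_le m) hP0
  have hsucc : (J + 1) * t = J * t + t := Nat.succ_mul J t
  have hJ2 : m < J * t + t + n + 1 := by
    by_contra hcon
    push_neg at hcon
    have h1 : J ≤ J * t := Nat.le_mul_of_pos_right J (by omega)
    have hJm : J + 1 ≤ m := by omega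
    have h2 := Nat.findGreatest_is_greatest (P := fun J => J * t + n + 1 ≤ m) (by omega : J < J + 1) hJm
    exact h2 (show (J + 1) * t + n + 1 ≤ m by rw [hsucc]; omega)
  obtain ⟨σ, hσ0, htrans, hbits, hneg⟩ := key J hJ1
  obtain ⟨x₂, hx₂E, hx₂len, hx₂drop⟩ := hT
  obtain ⟨σ₂, hσ₂0, hσ₂F, hσ₂spec⟩ := encSpec E q0 Fs hx₂E
  set q' := m - (k-1) with hq'def
  set e := x₂.length - (k-1) with hedef
  have Agr2 : ∀ i, i < k - 1 → x[q' + i]? = x₂[e + i]? := by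
    intro i hi
    have h1 : (x.drop q')[i]? = x[q' + i]? := List.getElem?_drop
    have h2 : (x₂.drop e)[i]? = x₂[e + i]? := List.getElem?_drop
    rw [← h1, ← h2, hx₂drop]
  have hJpos : 1 ≤ J := by
    by_contra h
    have h0 : J = 0 := by omega
    rw [h0, Nat.zero_mul] at hJ2
    omega
  set i₁ := J * t - q' with hi₁def
  have hEXT := extend hn ht hidx hinj x x₂ σ₂
      (fun i b hb => (hσ₂spec i b hb).1) σ (J * t) q' e (k-1) i₁ Agr2
      (by omega) (by omega) (by omega) (by omega) hbits (hneg hJpos)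
  obtain ⟨hDmod, hDσ⟩ := hEXT
  set D := e + i₁ with hDdef
  set σ'' : ℕ → Q := fun i => if i ≤ J * t then σ i else σ₂ (D + (i - J * t))
    with hσ''def
  have hσ''lt : ∀ i, i ≤ J * t → σ'' i = σ i := by
    intro i h; simp only [hσ''def, if_pos h]
  have hσ''c : ∀ i, J * t ≤ i → σ'' i = σ₂ (D + (i - J * t)) := by
    intro i hci
    by_cases h : i ≤ J * t
    · have he : i = J * t := le_antisymm h hci
      subst he
      simp only [hσ''def, if_pos (le_refl _), Nat.sub_self, Nat.add_zero]
      exact hDσ.symm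
    · simp only [hσ''def, if_neg h]
  refine ⟨σ'', by rw [hσ''lt 0 (by omega)]; exact hσ0, ?_, ?_⟩
  · rw [hσ''c m (by omega), (by omega : D + (m - J * t) = x₂.length)]
    exact hσ₂F
  · intro i b hib
    have him : i < m := by
      have h2 := (List.getElem?_eq_some_iff.mp hib).1
      omega
    by_cases hic : i < J * t
    · rw [hσ''lt i (by omega), hσ''lt (i+1) (by omega)]
      exact htrans i b hic hib
    · push_neg at hic
      rw [hσ''c i hic, hσ''c (i+1) (by omega)]
      have hzi : x₂[e + (i₁ + (i - J * t))]? = some b := by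
        rw [← Agr2 _ (by omega : i₁ + (i - J * t) < k - 1),
          (by omega : q' + (i₁ + (i - J * t)) = i)]
        exact hib
      have htr := (hσ₂spec _ b hzi).2
      rw [(by omega : e + (i₁ + (i - J * t)) + 1 = D + (i + 1 - J * t)),
        (by omega : e + (i₁ + (i - J * t)) = D + (i - J * t))] at htr
      exact htr

end glue

end SLT4

/-- Every regular language `L ⊆ A⁺` over a finite alphabet `A`
is `(2|A|, k)`-homomorphic for some `k ≥ 2`. -/
theorem regular_is_double_alphabet_homomorphic {A : Type} [Fintype A]
    (L : Set (List A)) (hL : RegularLang L) :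
    ∃ k : ℕ, 2 ≤ k ∧ IsHomomorphic (2 * Fintype.card A) k L := by
  classical
  open SLT4 in
  obtain ⟨Q, E, q0, Fs, hQfin, hq0F, rfl⟩ := hL
  haveI : Fintype Q := Fintype.ofFinite Q
  set n := Fintype.card Q with hndef
  have hn : 1 ≤ n := Fintype.card_pos_iff.mpr ⟨q0⟩
  set t := 2 * n + 1 with htdef
  set k := 4 * t with hkdef
  set idx : Q → ℕ := fun q => ((Fintype.equivFin Q) q : ℕ) with hidxdef
  have hidx : ∀ q, idx q < n := fun q => (Fintype.equivFin Q q).2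
  have hinj : Function.Injective idx := by
    intro a b hab
    exact (Fintype.equivFin Q).injective (Fin.val_injective hab)
  set EncS := SLT4.Enc E q0 Fs t idx with hEncdef
  set S := {z : List (A × Bool) | z ∈ EncS ∧ k ≤ z.length} with hSdef
  set I := (fun z : List (A × Bool) => z.take (k-1)) '' S with hIdef
  set T := (fun z : List (A × Bool) => z.drop (z.length - (k-1))) '' S with hTdef
  set F := {y : List (A × Bool) | y.length = k ∧ ∃ z ∈ S, y <:+: z} with hFdef
  set L' := {x : List (A × Bool) |
      (x.length < k ∧ x ∈ EncS) ∨
      (k ≤ x.length ∧ x.take (k-1) ∈ I ∧ x.drop (x.length - (k-1)) ∈ T ∧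
        ∀ y : List (A × Bool), y.length = k → y <:+: x → y ∈ F)} with hL'def
  have hkn : 2 ≤ k := by omega
  have hmemL' : ∀ x : List (A × Bool), x ∈ L' ↔
      ((x.length < k ∧ x ∈ EncS) ∨
      (k ≤ x.length ∧ x.take (k-1) ∈ I ∧ x.drop (x.length - (k-1)) ∈ T ∧
        ∀ y : List (A × Bool), y.length = k → y <:+: x → y ∈ F)) := by
    intro x
    rw [hL'def]
    rfl
  refine ⟨k, hkn, A × Bool, inferInstance, L', Prod.fst, ?_, ?_, ?_, ?_⟩
  · rw [Fintype.card_prod, Fintype.card_bool, Nat.mul_comm]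
  · -- IsSLT
    refine ⟨I, T, F, ?_, ?_, ?_, ?_⟩
    · rintro w ⟨z, ⟨hz, hlen⟩, rfl⟩
      rw [List.length_take]
      omega
    · rintro w ⟨z, ⟨hz, hlen⟩, rfl⟩
      rw [List.length_drop]
      omega
    · rintro w ⟨h, _⟩
      exact h
    · intro x hx
      rw [hmemL']
      constructor
      · rintro (⟨h1, _⟩ | ⟨_, h2, h3, h4⟩)
        · omega
        · exact ⟨h2, h3, h4⟩
      · rintro ⟨h2, h3, h4⟩
        exact Or.inr ⟨hx, h2, h3, h4⟩
  · -- [] ∉ L'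
    rw [hmemL']
    rintro (⟨_, hE⟩ | ⟨hlen, _⟩)
    · obtain ⟨w, σ, hw, h0, hFm, _⟩ := hE
      have hw0 : w.length = 0 := by
        have h9 := congrArg List.length hw
        rw [length_enc] at h9
        simpa using h9.symm
      rw [hw0, h0] at hFm
      exact hq0F hFm
    · simp at hlen
  · -- image equality
    ext w
    constructor
    · intro hw
      obtain ⟨σ, hwne, h0, hFm, hstep⟩ := mem_run E q0 Fs hw
      set f : ℕ → ℕ := fun p => idx (σ p) with hfdef
      have hxE : enc t f w ∈ EncS := ⟨w, σ, rfl, h0, hFm, hstep⟩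
      have hxlen : (enc t f w).length = w.length := length_enc t f w
      refine ⟨enc t f w, ?_, map_fst_enc t f w⟩
      rw [hmemL']
      by_cases hlen : (enc t f w).length < k
      · exact Or.inl ⟨hlen, hxE⟩
      · push_neg at hlen
        refine Or.inr ⟨hlen, ⟨enc t f w, ⟨hxE, hlen⟩, rfl⟩,
          ⟨enc t f w, ⟨hxE, hlen⟩, rfl⟩, ?_⟩
        intro y hy hyx
        exact ⟨hy, enc t f w, ⟨hxE, hlen⟩, hyx⟩
    · rintro ⟨x, hxL', rfl⟩
      rw [hmemL'] at hxL'
      rcases hxL' with ⟨hlen, hE⟩ | ⟨hlen, h2, h3, h4⟩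
      · obtain ⟨w', σ, rfl, h0, hFm, hstep⟩ := hE
        rw [map_fst_enc]
        have hne : w' ≠ [] := by
          intro hnil
          subst hnil
          rw [List.length_nil, h0] at hFm
          exact hq0F hFm
        exact run_mem E q0 Fs w' σ hne h0 hFm hstep
      · have hI' : ∃ x₁ ∈ EncS, k ≤ x₁.length ∧ x₁.take (k-1) = x.take (k-1) := by
          obtain ⟨z, ⟨hz, hzl⟩, hzt⟩ := h2
          exact ⟨z, hz, hzl, hzt⟩
        have hT' : ∃ x₂ ∈ EncS, k ≤ x₂.length ∧
            x₂.drop (x₂.length - (k-1)) = x.drop (x.length - (k-1)) := by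
          obtain ⟨z, ⟨hz, hzl⟩, hzt⟩ := h3
          exact ⟨z, hz, hzl, hzt⟩
        have hF' : ∀ y : List (A × Bool), y.length = k → y <:+: x →
            ∃ z ∈ EncS, y <:+: z := by
          intro y hy hyx
          obtain ⟨_, z, ⟨hz, _⟩, hyz⟩ := h4 y hy hyx
          exact ⟨z, hz, hyz⟩
        obtain ⟨σ, h0, hFm, hstep⟩ :=
          glue E q0 Fs hn htdef hkdef hidx hinj x hlen hI' hT' hF'
        have hlenm : (x.map Prod.fst).length = x.length := List.length_map Prod.fst
        apply run_mem E q0 Fs _ σ ?_ h0 (by rw [hlenm]; exact hFm) ?_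
        · intro hnil
          have : (x.map Prod.fst).length = 0 := by rw [hnil]; rfl
          omega
        · intro i h
          have hi : i < x.length := by rwa [hlenm] at h
          have hx : x[i]? = some (x[i]'hi) := List.getElem?_eq_getElem hi
          have htr := hstep i _ hx
          have hmap : (x.map Prod.fst)[i]'h = (x[i]'hi).1 := List.getElem_map _
          rw [hmap]
          exact htr
end

section
/- For all finite alphabets Q and D with n = |Q| ≥ 2 and h = |D| satisfying 2 ≤ h < n, there exists a factor-decodable code of Q into D of length m = ⌈g(h) + f(h)·log₂ n⌉, and this value of m satisfies m ≥ 3. -/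
/-- A code of `Q` into `D` of length `m`: an injective map sending each state to
a word of length `m`. -/
def IsCode {Q D : Type} (m : ℕ) (c : Q → List D) : Prop :=
  Function.Injective c ∧ ∀ q, (c q).length = m

/-- A word `x ∈ D^{2m-1}` is factor-decodable: there is exactly one position `j`,
`1 ≤ j ≤ m`, such that the factor of `x` of length `m` starting at position `j`
is a codeword. -/
def FactorDecodableWord {Q D : Type} (m : ℕ) (c : Q → List D) (x : List D) : Prop :=
  ∃! j : ℕ, 1 ≤ j ∧ j ≤ m ∧ ∃ q : Q, (x.drop (j - 1)).take m = c q

/-- The code `c` is factor-decodable: every factor of length `2m-1` of every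
concatenation of codewords is factor-decodable. -/
def IsFactorDecodableCode {Q D : Type} (m : ℕ) (c : Q → List D) : Prop :=
  IsCode m c ∧
  ∀ l : List Q, l ≠ [] → ∀ x : List D, x.length = 2 * m - 1 →
    x <:+: (l.map c).flatten → FactorDecodableWord m c x

/-- The function `f` of the paper. -/
noncomputable def fFun (h : ℝ) : ℝ :=
  (Real.logb 2 (h - 1 + Real.sqrt ((h - 1) * (h + 3))) - 1)⁻¹

/-- The function `g` of the paper. -/
noncomputable def gFun (h : ℝ) : ℝ :=
  1 + (fFun h / 2) * (Real.logb 2 (h - 1) + Real.logb 2 (h + 3))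

namespace FDCAux

/-- Counting sequence: `sseq e k` = number of words of length `k` over an
alphabet of size `e+1` avoiding `d₀d₀` and not starting with `d₀`. -/
def sseq (e : ℕ) : ℕ → ℕ
  | 0 => 1
  | 1 => e
  | (k+2) => e * (sseq e (k+1) + sseq e k)

lemma sseq_pos (e : ℕ) (he : 1 ≤ e) : ∀ k, 0 < sseq e k
  | 0 => by simp [sseq]
  | 1 => by simp only [sseq]; omega
  | (k+2) => by
      have h1 := sseq_pos e he (k+1)
      have h2 := sseq_pos e he k
      simp only [sseq]
      exact Nat.mul_pos he (by omega)

variable {D : Type}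

/-- `Good d0 w` : `w` has no two adjacent `d0`'s and does not start with `d0`. -/
def Good (d0 : D) (w : List D) : Prop :=
  ∀ t, ¬ ((d0 :: w)[t]? = some d0 ∧ (d0 :: w)[t+1]? = some d0)

lemma good_nil (d0 : D) : Good d0 [] := by
  intro t ht
  rcases t with _ | t
  · simp at ht
  · simp at ht

lemma good_head {d0 : D} {w : List D} (hw : Good d0 w) : w[0]? ≠ some d0 := by
  intro h
  exact hw 0 ⟨by simp, by simpa using h⟩

lemma good_cons {d0 a : D} {w : List D} (ha : a ≠ d0) (hw : Good d0 w) :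
    Good d0 (a :: w) := by
  intro t ht
  match t with
  | 0 => exact ha (by have := ht.2; simpa using this)
  | 1 => exact ha (by have := ht.1; simpa using this)
  | (t+2) =>
      refine hw (t+1) ⟨?_, ?_⟩
      · simpa using ht.1
      · simpa using ht.2

lemma good_cons2 {d0 a : D} {w : List D} (ha : a ≠ d0) (hw : Good d0 w) :
    Good d0 (a :: d0 :: w) := by
  intro t ht
  match t with
  | 0 => exact ha (by simpa using ht.2)
  | 1 => exact ha (by simpa using ht.1)
  | 2 => exact good_head hw (by simpa using ht.2)
  | (t+3) =>
      refine hw (t+1) ⟨?_, ?_⟩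
      · simpa using ht.1
      · simpa using ht.2

/-- Encoder of integers `< sseq e k` into good words of length `k`. -/
def enc (d0 : D) (nz : ℕ → D) (e : ℕ) : ℕ → ℕ → List D
  | 0, _ => []
  | 1, i => [nz i]
  | (k+2), i =>
    if i % (sseq e (k+1) + sseq e k) < sseq e (k+1) then
      nz (i / (sseq e (k+1) + sseq e k)) ::
        enc d0 nz e (k+1) (i % (sseq e (k+1) + sseq e k))
    else
      nz (i / (sseq e (k+1) + sseq e k)) :: d0 ::
        enc d0 nz e k (i % (sseq e (k+1) + sseq e k) - sseq e (k+1))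

lemma enc_length (d0 : D) (nz : ℕ → D) (e : ℕ) :
    ∀ k i, (enc d0 nz e k i).length = k
  | 0, i => rfl
  | 1, i => rfl
  | (k+2), i => by
      simp only [enc]
      split
      · simp [enc_length d0 nz e (k+1)]
      · simp [enc_length d0 nz e k]

variable {d0 : D} {nz : ℕ → D} {e : ℕ}

lemma enc_good (he : 1 ≤ e) (hnz : ∀ a < e, nz a ≠ d0) :
    ∀ k i, i < sseq e k → Good d0 (enc d0 nz e k i)
  | 0, i, _ => good_nil d0
  | 1, i, hi => good_cons (hnz i (by simpa [sseq] using hi)) (good_nil d0)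
  | (k+2), i, hi => by
      have hS : 0 < sseq e (k+1) + sseq e k :=
        Nat.add_pos_left (sseq_pos e he (k+1)) _
      have ha : i / (sseq e (k+1) + sseq e k) < e := by
        rw [Nat.div_lt_iff_lt_mul hS]
        simp only [sseq] at hi
        exact hi
      have hb : i % (sseq e (k+1) + sseq e k) < sseq e (k+1) + sseq e k :=
        Nat.mod_lt _ hS
      simp only [enc]
      split
      · exact good_cons (hnz _ ha) (enc_good he hnz (k+1) _ (by omega))
      · exact good_cons2 (hnz _ ha) (enc_good he hnz k _ (by omega))

lemma enc_ne_nil (hk : 1 ≤ k) (i : ℕ) : enc d0 nz e k i ≠ [] := by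
  intro h
  have := enc_length d0 nz e k i
  rw [h] at this
  simp at this
  omega

lemma enc_inj (he : 1 ≤ e) (hnz : ∀ a < e, nz a ≠ d0)
    (hnzinj : ∀ a < e, ∀ b < e, nz a = nz b → a = b) :
    ∀ k i j, i < sseq e k → j < sseq e k →
      enc d0 nz e k i = enc d0 nz e k j → i = j
  | 0, i, j, hi, hj, _ => by simp [sseq] at hi hj; omega
  | 1, i, j, hi, hj, h => by
      simp only [enc, List.cons.injEq] at h
      exact hnzinj i (by simpa [sseq] using hi) j (by simpa [sseq] using hj) h.1
  | (k+2), i, j, hi, hj, h => by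
      have hS : 0 < sseq e (k+1) + sseq e k :=
        Nat.add_pos_left (sseq_pos e he (k+1)) _
      have hadiv : ∀ x : ℕ, x < sseq e (k+2) → x / (sseq e (k+1) + sseq e k) < e := by
        intro x hx
        rw [Nat.div_lt_iff_lt_mul hS]
        simp only [sseq] at hx
        exact hx
      have hbm : ∀ x : ℕ, x % (sseq e (k+1) + sseq e k) < sseq e (k+1) + sseq e k :=
        fun x => Nat.mod_lt _ hS
      have hdmi := Nat.div_add_mod i (sseq e (k+1) + sseq e k)
      have hdmj := Nat.div_add_mod j (sseq e (k+1) + sseq e k)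
      by_cases hci : i % (sseq e (k+1) + sseq e k) < sseq e (k+1) <;>
        by_cases hcj : j % (sseq e (k+1) + sseq e k) < sseq e (k+1) <;>
        simp only [enc, if_pos, if_neg, hci, hcj, if_true, if_false,
          List.cons.injEq, true_and, and_true] at h
      · obtain ⟨h1, h2⟩ := h
        have ha := hnzinj _ (hadiv i hi) _ (hadiv j hj) h1
        have hb := enc_inj he hnz hnzinj (k+1) _ _ hci hcj h2
        rw [ha, hb] at hdmi
        omega
      · exfalso
        obtain ⟨h1, h2⟩ := h
        have hgood := enc_good he hnz (k+1)
          (i % (sseq e (k+1) + sseq e k)) hci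
        have hne := good_head hgood
        rw [h2] at hne
        simp at hne
      · exfalso
        obtain ⟨h1, h2⟩ := h
        have hgood := enc_good he hnz (k+1)
          (j % (sseq e (k+1) + sseq e k)) hcj
        have hne := good_head hgood
        rw [← h2] at hne
        simp at hne
      · obtain ⟨h1, h2⟩ := h
        have ha := hnzinj _ (hadiv i hi) _ (hadiv j hj) h1
        have hb := enc_inj he hnz hnzinj k _ _
          (by have := hbm i; omega) (by have := hbm j; omega) h2
        have hmm : i % (sseq e (k+1) + sseq e k) = j % (sseq e (k+1) + sseq e k) := by
          omega
        rw [ha, hmm] at hdmi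
        omega


section Main

variable {Q D : Type}

lemma flatten_getElem? (m : ℕ) (hm : 0 < m) (c : Q → List D)
    (hlen : ∀ q, (c q).length = m) :
    ∀ (l : List Q) (t : ℕ),
      ((l.map c).flatten)[t]? = (l[t / m]?).bind (fun q => (c q)[t % m]?)
  | [], t => by simp
  | q :: l, t => by
    simp only [List.map_cons, List.flatten_cons]
    rcases Nat.lt_or_ge t m with h | h
    · rw [List.getElem?_append_left (by rw [hlen]; exact h)]
      rw [Nat.div_eq_of_lt h, Nat.mod_eq_of_lt h]
      simp
    · rw [List.getElem?_append_right (by rw [hlen]; exact h), hlen,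
        flatten_getElem? m hm c hlen l (t - m)]
      have h1 : t / m = (t - m) / m + 1 := by
        conv_lhs => rw [show t = (t - m) + 1 * m by omega]
        rw [Nat.add_mul_div_right _ _ hm]
      have h2 : t % m = (t - m) % m := by
        conv_lhs => rw [show t = (t - m) + m by omega]
        rw [Nat.add_mod_right]
      rw [h1, h2, List.getElem?_cons_succ]

lemma main_decodable (m : ℕ) (hm : 3 ≤ m) (d0 : D) (w : Q → List D)
    (hlen : ∀ q, (w q).length = m - 2)
    (hgood : ∀ q, Good d0 (w q))
    (hinj : Function.Injective w) :
    IsFactorDecodableCode m (fun q => d0 :: d0 :: w q) := by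
  set c : Q → List D := fun q => d0 :: d0 :: w q with hc
  have hm0 : 0 < m := by omega
  have clen : ∀ q, (c q).length = m := by
    intro q
    simp only [hc, List.length_cons, hlen]
    omega
  have cw0 : ∀ q : Q, (c q)[0]? = some d0 := by intro q; simp [hc]
  have cw1 : ∀ q : Q, (c q)[1]? = some d0 := by intro q; simp [hc]
  have cw2 : ∀ q : Q, (c q)[2]? ≠ some d0 := by
    intro q h
    exact good_head (hgood q) (by simpa [hc] using h)
  have cwpair : ∀ (q : Q) (t : ℕ), (c q)[t+1]? = some d0 →
      (c q)[t+2]? ≠ some d0 := by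
    intro q t h1 h2
    exact hgood q t ⟨by simpa [hc] using h1, by simpa [hc] using h2⟩
  refine ⟨⟨?_, clen⟩, ?_⟩
  · intro a b hab
    simp only [hc, List.cons.injEq, true_and] at hab
    exact hinj hab
  intro l _ x hx hinf
  obtain ⟨u, v, huv⟩ := hinf
  set F := (l.map c).flatten with hF
  set p := u.length with hp
  have Fget : ∀ t : ℕ, F[t]? = (l[t / m]?).bind (fun q => (c q)[t % m]?) :=
    flatten_getElem? m hm0 c clen l
  have xget : ∀ i, i < x.length → x[i]? = F[p + i]? := by
    intro i hi
    rw [← huv, List.append_assoc, List.getElem?_append_right (by omega),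
      show p + i - u.length = i by omega,
      List.getElem?_append_left hi]
  have hFlen : p + x.length ≤ F.length := by
    rw [← huv]
    simp only [List.length_append]
    omega
  -- marker lemma
  have marker : ∀ t : ℕ, F[t]? = some d0 → F[t+1]? = some d0 →
      F[t+2]? ≠ some d0 → t % m = 0 := by
    intro t h0 h1 h2
    by_contra hr
    have hdm := Nat.div_add_mod t m
    set i := t / m with hi
    set r := t % m with hrdef
    have hrm : r < m := Nat.mod_lt _ hm0
    rcases Nat.lt_or_ge (r+1) m with hcase | hcase
    · -- r+1 < m : both within codeword i
      have e1 : (t+1) / m = i := by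
        rw [show t + 1 = m * i + (r + 1) by omega, Nat.mul_add_div hm0,
          Nat.div_eq_of_lt hcase, Nat.add_zero]
      have e2 : (t+1) % m = r + 1 := by
        rw [show t + 1 = m * i + (r + 1) by omega, Nat.mul_add_mod,
          Nat.mod_eq_of_lt hcase]
      rw [Fget] at h0 h1
      rw [e1, e2] at h1
      obtain ⟨q, hq, hcq⟩ := Option.bind_eq_some_iff.mp h0
      rw [hq] at h1
      simp only [Option.bind_some] at h1
      rw [← hrdef] at hcq
      obtain ⟨s, hs⟩ : ∃ s, r = s + 1 := ⟨r - 1, by omega⟩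
      rw [hs] at hcq
      exact cwpair q s hcq (by rw [hs] at h1; simpa using h1)
    · -- r = m-1 : boundary
      have hr1 : r = m - 1 := by omega
      have e1 : (t+1) / m = i + 1 := by
        rw [show t + 1 = m * i + m by omega, show m * i + m = m * (i+1) by ring,
          Nat.mul_div_cancel_left _ hm0]
      have e2 : (t+1) % m = 0 := by
        rw [show t + 1 = m * i + m by omega, show m * i + m = m * (i+1) by ring,
          Nat.mul_mod_right]
      have e3 : (t+2) / m = i + 1 := by
        rw [show t + 2 = m * i + m + 1 by omega,
          show m * i + m + 1 = m * (i+1) + 1 by ring, Nat.mul_add_div hm0,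
          Nat.div_eq_of_lt (by omega), Nat.add_zero]
      have e4 : (t+2) % m = 1 := by
        rw [show t + 2 = m * i + m + 1 by omega,
          show m * i + m + 1 = m * (i+1) + 1 by ring, Nat.mul_add_mod,
          Nat.mod_eq_of_lt (by omega)]
      rw [Fget, e1, e2] at h1
      obtain ⟨q', hq', _⟩ := Option.bind_eq_some_iff.mp h1
      apply h2
      rw [Fget, e3, e4, hq']
      simp only [Option.bind_some]
      exact cw1 q'
  -- the true position
  have hdp := Nat.div_add_mod p m
  set j : ℕ := if p % m = 0 then 1 else m + 1 - p % m with hj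
  have hprm : p % m < m := Nat.mod_lt _ hm0
  have hj1 : 1 ≤ j := by rw [hj]; split <;> omega
  have hjm : j ≤ m := by rw [hj]; split <;> omega
  set t := p + (j - 1) with ht
  have htm : t % m = 0 := by
    by_cases h0 : p % m = 0
    · have : t = p := by rw [ht, hj, if_pos h0]; omega
      rw [this]
      exact h0
    · have : t = m * (p / m) + m := by rw [ht, hj, if_neg h0]; omega
      rw [this, show m * (p / m) + m = m * (p / m + 1) by ring, Nat.mul_mod_right]
  have hxlen : x.length = 2 * m - 1 := hx
  -- F values along the codeword at position t
  have htF : ∀ i, i < m → F[t+i]? = (l[t/m]?).bind (fun q => (c q)[i]?) := by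
    intro i hilt
    have hdt := Nat.div_add_mod t m
    rw [Fget]
    have e1 : (t+i) / m = t / m := by
      conv_lhs => rw [show t + i = m * (t/m) + i by omega]
      rw [Nat.mul_add_div hm0, Nat.div_eq_of_lt hilt, Nat.add_zero]
    have e2 : (t+i) % m = i := by
      conv_lhs => rw [show t + i = m * (t/m) + i by omega]
      rw [Nat.mul_add_mod, Nat.mod_eq_of_lt hilt]
    rw [e1, e2]
  have ht_lt : t < F.length := by omega
  obtain ⟨q, hq⟩ : ∃ q, l[t/m]? = some q := by
    have h0 := htF 0 (by omega)
    rw [Nat.add_zero] at h0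
    have hsome : F[t]? = some (F[t]'ht_lt) := List.getElem?_eq_getElem ht_lt
    rw [h0] at hsome
    obtain ⟨q', hq', _⟩ := Option.bind_eq_some_iff.mp hsome
    exact ⟨q', hq'⟩
  have hwindow : (x.drop (j - 1)).take m = c q := by
    apply List.ext_getElem?
    intro i
    rcases Nat.lt_or_ge i m with hilt | hige
    · rw [List.getElem?_take_of_lt hilt, List.getElem?_drop,
        xget ((j-1) + i) (by omega),
        show p + ((j-1) + i) = t + i by omega, htF i hilt, hq]
      simp
    · rw [List.getElem?_eq_none (by
        simp only [List.length_take, List.length_drop]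
        omega),
        List.getElem?_eq_none (by rw [clen]; omega)]
  refine ⟨j, ⟨hj1, hjm, q, hwindow⟩, ?_⟩
  -- uniqueness
  rintro j' ⟨hj'1, hj'm, q', hw'⟩
  have hwl : ((x.drop (j' - 1)).take m).length = m := by
    rw [hw', clen]
  have hget : ∀ i, i < m → x[(j'-1) + i]? = (c q')[i]? := by
    intro i hilt
    rw [← List.getElem?_drop, ← List.getElem?_take_of_lt (l := x.drop (j'-1)) hilt, hw']
  set t' := p + (j' - 1) with ht'
  have h0 : F[t']? = some d0 := by
    rw [← show p + ((j'-1) + 0) = t' by omega, ← xget _ (by omega), hget 0 (by omega)]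
    exact cw0 q'
  have h1f : F[t'+1]? = some d0 := by
    rw [← show p + ((j'-1) + 1) = t' + 1 by omega, ← xget _ (by omega), hget 1 (by omega)]
    exact cw1 q'
  have h2f : F[t'+2]? ≠ some d0 := by
    rw [← show p + ((j'-1) + 2) = t' + 2 by omega, ← xget _ (by omega), hget 2 (by omega)]
    exact cw2 q'
  have ht'm : t' % m = 0 := marker t' h0 h1f h2f
  have hd1 : m ∣ t' - t := Nat.dvd_sub (Nat.dvd_of_mod_eq_zero ht'm) (Nat.dvd_of_mod_eq_zero htm)
  have hd2 : m ∣ t - t' := Nat.dvd_sub (Nat.dvd_of_mod_eq_zero htm) (Nat.dvd_of_mod_eq_zero ht'm)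
  have hl1 : t' - t < m := by omega
  have hl2 : t - t' < m := by omega
  have e1 : t' - t = 0 := by
    rcases Nat.eq_zero_or_pos (t' - t) with h | h
    · exact h
    · exact absurd hl1 (not_lt.mpr (Nat.le_of_dvd h hd1))
  have e2 : t - t' = 0 := by
    rcases Nat.eq_zero_or_pos (t - t') with h | h
    · exact h
    · exact absurd hl2 (not_lt.mpr (Nat.le_of_dvd h hd2))
  omega

end Main


section Analytic

open Real

lemma analytic (h n m : ℕ) (hh : 2 ≤ h) (hn : h < n)
    (hm : gFun (h : ℝ) + fFun (h : ℝ) * Real.logb 2 (n : ℝ) ≤ (m : ℝ)) :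
    3 ≤ m ∧ n ≤ sseq (h-1) (m-2) := by
  have hn3 : 3 ≤ n := by omega
  set H : ℝ := (h : ℝ) with hH
  have hH2 : (2:ℝ) ≤ H := by rw [hH]; exact_mod_cast hh
  have hΔpos : (0:ℝ) < (H-1)*(H+3) := by nlinarith
  set sq : ℝ := Real.sqrt ((H-1)*(H+3)) with hsqdef
  have hsq2 : sq^2 = (H-1)*(H+3) := Real.sq_sqrt hΔpos.le
  have hsqpos : 0 < sq := Real.sqrt_pos.mpr hΔpos
  have hsq_gt : H - 1 < sq := by nlinarith
  have hsq_lt : sq < H + 1 := by nlinarith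
  set lam : ℝ := (H - 1 + sq)/2 with hlamdef
  set mu : ℝ := (H - 1 - sq)/2 with hmudef
  have hlam1 : 1 < lam := by rw [hlamdef]; nlinarith
  have hlampos : (0:ℝ) < lam := by linarith
  have hlam_lt_sq : lam < sq := by rw [hlamdef]; linarith
  have hmu_lt : mu < 1 := by rw [hmudef]; linarith
  have hmu_gt : -1 < mu := by rw [hmudef]; linarith
  have hL : 0 < Real.logb 2 lam := Real.logb_pos one_lt_two hlam1
  have hf : fFun H = (Real.logb 2 lam)⁻¹ := by
    rw [fFun, show H - 1 + Real.sqrt ((H-1)*(H+3)) = 2 * lam by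
      rw [← hsqdef, hlamdef]; ring]
    rw [Real.logb_mul two_ne_zero (by positivity),
      Real.logb_self_eq_one one_lt_two]
    ring_nf
  have hg : (gFun H - 1) * Real.logb 2 lam = Real.logb 2 sq := by
    rw [gFun, hf]
    have h13 : Real.logb 2 (H-1) + Real.logb 2 (H+3) = Real.logb 2 ((H-1)*(H+3)) :=
      (Real.logb_mul (by nlinarith) (by nlinarith)).symm
    have h2 : Real.logb 2 ((H-1)*(H+3)) = 2 * Real.logb 2 sq := by
      rw [← hsq2, Real.logb_pow]
      norm_num
    rw [h13, h2]
    field_simp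
    ring
  have hnpos : (0:ℝ) < (n:ℝ) := by exact_mod_cast (by omega : 0 < n)
  have hn1 : (1:ℝ) < (n:ℝ) := by exact_mod_cast (by omega : 1 < n)
  have hlogn : 0 < Real.logb 2 (n:ℝ) := Real.logb_pos one_lt_two hn1
  have hlogsq : Real.logb 2 lam < Real.logb 2 sq :=
    Real.logb_lt_logb one_lt_two hlampos hlam_lt_sq
  have hg2 : 2 < gFun H := by
    by_contra hcon
    push_neg at hcon
    have hle : (gFun H - 1) * Real.logb 2 lam ≤ 1 * Real.logb 2 lam :=
      mul_le_mul_of_nonneg_right (by linarith) hL.le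
    rw [hg, one_mul] at hle
    linarith
  have hfpos : 0 < fFun H := by rw [hf]; positivity
  have hm3 : 3 ≤ m := by
    have h2m : (2:ℝ) < (m:ℝ) := by linarith [mul_pos hfpos hlogn]
    have : 2 < m := by exact_mod_cast h2m
    omega
  have key : Real.logb 2 (n:ℝ) ≤ ((m:ℝ) - 1) * Real.logb 2 lam - Real.logb 2 sq := by
    have h1 : fFun H * Real.logb 2 (n:ℝ) ≤ (m:ℝ) - gFun H := by linarith
    have h2 : fFun H * Real.logb 2 (n:ℝ) * Real.logb 2 lam = Real.logb 2 (n:ℝ) := by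
      rw [hf]; field_simp
    have h3 := mul_le_mul_of_nonneg_right h1 hL.le
    rw [h2] at h3
    have h4 : ((m:ℝ) - gFun H) * Real.logb 2 lam
        = ((m:ℝ)-1) * Real.logb 2 lam - Real.logb 2 sq := by
      linear_combination -hg
    linarith
  have hpow : Real.logb 2 (lam^(m-1)/sq) = ((m:ℝ)-1) * Real.logb 2 lam - Real.logb 2 sq := by
    rw [Real.logb_div (by positivity) (by positivity), Real.logb_pow,
      Nat.cast_sub (by omega : 1 ≤ m)]
    norm_num
  have hnle : (n:ℝ) ≤ lam^(m-1)/sq := by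
    have hx : Real.logb 2 (n:ℝ) ≤ Real.logb 2 (lam^(m-1)/sq) := by
      rw [hpow]; exact key
    exact (Real.logb_le_logb one_lt_two hnpos (by positivity)).mp hx
  have hE : ((h-1 : ℕ) : ℝ) = H - 1 := by
    rw [Nat.cast_sub (by omega : 1 ≤ h)]
    norm_num
    exact hH.symm
  have qlam : lam^2 = (H-1)*(lam+1) := by
    rw [hlamdef]; linear_combination (1/4 : ℝ) * hsq2
  have qmu : mu^2 = (H-1)*(mu+1) := by
    rw [hmudef]; linear_combination (1/4 : ℝ) * hsq2
  have step : ∀ (k : ℕ) (y : ℝ), y^2 = (H-1)*(y+1) →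
      (H-1) * (y^(k+2) + y^(k+1)) = y^(k+3) := by
    intro k y hy
    have hexp : y^(k+3) = y^(k+1) * y^2 := by ring
    rw [hexp, hy]; ring
  have hcf : ∀ k, ((sseq (h-1) k : ℕ) : ℝ) = (lam^(k+1) - mu^(k+1))/sq := by
    intro k
    induction k using Nat.strong_induction_on with
    | _ k ih =>
      match k with
      | 0 =>
        simp only [sseq, Nat.cast_one, pow_one]
        rw [eq_div_iff (ne_of_gt hsqpos), hlamdef, hmudef]
        ring
      | 1 =>
        simp only [sseq, hE, pow_two]
        rw [eq_div_iff (ne_of_gt hsqpos), hlamdef, hmudef]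
        ring
      | (k+2) =>
        have i1 := ih (k+1) (by omega)
        have i2 := ih k (by omega)
        rw [show sseq (h-1) (k+2) = (h-1) * (sseq (h-1) (k+1) + sseq (h-1) k) from
          by simp [sseq]]
        push_cast
        rw [hE, i1, i2, ← add_div, ← mul_div_assoc]
        congr 1
        linear_combination step k lam qlam - step k mu qmu
  have hcast : ((sseq (h-1) (m-2) : ℕ) : ℝ) = (lam^(m-1) - mu^(m-1))/sq := by
    rw [hcf (m-2), show m - 2 + 1 = m - 1 from by omega]
  have hmusmall : mu^(m-1) ≤ 1 := by
    calc mu^(m-1) ≤ |mu^(m-1)| := le_abs_self _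
    _ = |mu|^(m-1) := abs_pow ..
    _ ≤ 1 := pow_le_one₀ (abs_nonneg _) (abs_le.mpr ⟨hmu_gt.le, hmu_lt.le⟩)
  have hfinal : (n:ℝ) < ((sseq (h-1) (m-2) : ℕ) : ℝ) + 1 := by
    rw [hcast]
    have hid : lam^(m-1)/sq - (lam^(m-1) - mu^(m-1))/sq = mu^(m-1)/sq := by ring
    have h2 : mu^(m-1)/sq < 1 := by
      rw [div_lt_one hsqpos]; linarith
    linarith
  have : n < sseq (h-1) (m-2) + 1 := by exact_mod_cast hfinal
  exact ⟨hm3, by omega⟩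

end Analytic


end FDCAux

/-- For all finite alphabets `Q, D` with `n = |Q| ≥ 2` and
`h = |D|` satisfying `2 ≤ h < n`, there is a factor-decodable code of `Q` into
`D` of length `m = ⌈g(h) + f(h)·log₂ n⌉`, and this `m` satisfies `m ≥ 3`. -/
theorem exists_factor_decodable_code {Q D : Type} [Fintype Q] [Fintype D]
    (hn : 2 ≤ Fintype.card Q) (hh : 2 ≤ Fintype.card D)
    (hhn : Fintype.card D < Fintype.card Q) :
    3 ≤ ⌈gFun (Fintype.card D : ℝ) +
          fFun (Fintype.card D : ℝ) * Real.logb 2 (Fintype.card Q : ℝ)⌉₊ ∧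
    ∃ c : Q → List D,
      IsFactorDecodableCode
        (⌈gFun (Fintype.card D : ℝ) +
            fFun (Fintype.card D : ℝ) * Real.logb 2 (Fintype.card Q : ℝ)⌉₊) c := by
  classical
  set h := Fintype.card D with hhD
  set n := Fintype.card Q with hnQ
  set m := ⌈gFun (h:ℝ) + fFun (h:ℝ) * Real.logb 2 (n:ℝ)⌉₊ with hmdef
  have hmreal : gFun (h:ℝ) + fFun (h:ℝ) * Real.logb 2 (n:ℝ) ≤ (m:ℝ) := Nat.le_ceil _
  obtain ⟨hm3, hcount⟩ := FDCAux.analytic h n m hh hhn hmreal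
  refine ⟨hm3, ?_⟩
  let eD := Fintype.equivFin D
  let eQ := Fintype.equivFin Q
  have hh0 : 0 < h := by omega
  let d0 : D := eD.symm ⟨0, hh0⟩
  let nz : ℕ → D := fun a => eD.symm ⟨(a+1) % h, Nat.mod_lt _ hh0⟩
  have hnz : ∀ a < h - 1, nz a ≠ d0 := by
    intro a ha hne
    have h2 := eD.symm.injective hne
    rw [Fin.mk.injEq, Nat.mod_eq_of_lt (by omega)] at h2
    omega
  have hnzinj : ∀ a < h - 1, ∀ b < h - 1, nz a = nz b → a = b := by
    intro a ha b hb hne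
    have h2 := eD.symm.injective hne
    rw [Fin.mk.injEq, Nat.mod_eq_of_lt (by omega), Nat.mod_eq_of_lt (by omega)] at h2
    omega
  have he : 1 ≤ h - 1 := by omega
  let w : Q → List D := fun q => FDCAux.enc d0 nz (h-1) (m-2) (eQ q)
  have hwlt : ∀ q : Q, (eQ q : ℕ) < FDCAux.sseq (h-1) (m-2) := by
    intro q
    have h1 : (eQ q : ℕ) < n := by rw [hnQ]; exact (eQ q).isLt
    omega
  refine ⟨fun q => d0 :: d0 :: w q, FDCAux.main_decodable m hm3 d0 w ?_ ?_ ?_⟩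
  · intro q; exact FDCAux.enc_length d0 nz (h-1) (m-2) (eQ q)
  · intro q; exact FDCAux.enc_good he hnz (m-2) _ (hwlt q)
  · intro q1 q2 heq
    have h1 := FDCAux.enc_inj he hnz hnzinj (m-2) _ _ (hwlt q1) (hwlt q2) heq
    exact eQ.injective (Fin.ext h1)
end

section
/- Let Q and D be finite alphabets with |D| ≥ 2, let 0 ∈ D be a distinguished letter, and let m ≥ 3. Let [·] : Q → D^m be an injective map such that for every q ∈ Q the word [q] ends with the suffix 00 and the factor 00 occurs in [q] at no other position. Then [·] is a factor-decodable code. -/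
section Aux

variable {Q D : Type}

/-- Dropping `m * k` letters from a concatenation of words of length `m`
drops the first `k` words. -/
private lemma flatten_drop_mul (c : Q → List D) (m : ℕ)
    (hlen : ∀ q, (c q).length = m) :
    ∀ (k : ℕ) (l : List Q),
      ((l.map c).flatten).drop (m * k) = ((l.drop k).map c).flatten := by
  intro k
  induction k with
  | zero => intro l; simp
  | succ k ih =>
    intro l
    cases l with
    | nil => simp
    | cons q l' =>
      have h1 : m * (k + 1) = m + m * k := by ring
      have h2 : (c q ++ (l'.map c).flatten).drop m = (l'.map c).flatten := by
        rw [List.drop_append,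
          List.drop_eq_nil_of_le (by rw [hlen]), hlen]
        simp
      rw [List.map_cons, List.flatten_cons, h1, ← List.drop_drop, h2, ih l']
      simp

/-- The `k`-th codeword occurs at position `m * k`. -/
private lemma flatten_codeword (c : Q → List D) (m : ℕ)
    (hlen : ∀ q, (c q).length = m) (k : ℕ) (l : List Q) (hk : k < l.length) :
    (((l.map c).flatten).drop (m * k)).take m = c l[k] := by
  rw [flatten_drop_mul c m hlen k l, List.drop_eq_getElem_cons hk,
    List.map_cons, List.flatten_cons, ← hlen (l[k]), List.take_left]

private lemma flatten_length (c : Q → List D) (m : ℕ)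
    (hlen : ∀ q, (c q).length = m) (l : List Q) :
    ((l.map c).flatten).length = m * l.length := by
  induction l with
  | nil => simp
  | cons q l' ih =>
    simp only [List.map_cons, List.flatten_cons, List.length_append, hlen, ih,
      List.length_cons]
    ring

/-- If a word of length `m` (given as `(w.drop t).take m`) equals `cw`, then a
length-2 factor of `cw` at offset `e` is a length-2 factor of `w` at `t + e`. -/
private lemma occ_shift (w cw : List D) (m t e : ℕ)
    (hocc : (w.drop t).take m = cw) (he : e + 2 ≤ m) :
    (cw.drop e).take 2 = (w.drop (t + e)).take 2 := by
  rw [← hocc, List.drop_take, List.drop_drop, List.take_take]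
  congr 1
  omega

/-- If a codeword occurs at position `t` of `w`, then `zz` occurs at
position `t + (m - 2)` of `w`. -/
private lemma suffix_occ (z : D) (w cw : List D) (m t : ℕ) (hm : 3 ≤ m)
    (hocc : (w.drop t).take m = cw) (hs : cw.drop (m - 2) = [z, z]) :
    (w.drop (t + (m - 2))).take 2 = [z, z] := by
  rw [← occ_shift w cw m t (m - 2) hocc (by omega), hs]
  have h2 : (2 : ℕ) ≤ ([z, z] : List D).length := by simp
  rw [List.take_of_length_le h2]

/-- An occurrence of `zz` in the concatenation, lying inside a single codeword,
is at offset `m - 2` of that codeword. -/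
private lemma zz_mod (z : D) (c : Q → List D) (m : ℕ) (hm : 3 ≤ m)
    (hlen : ∀ q, (c q).length = m)
    (honly : ∀ q, ∀ i : ℕ, i + 2 ≤ m → ((c q).drop i).take 2 = [z, z] → i = m - 2)
    (l : List Q) (i : ℕ) (hk : i / m < l.length)
    (hP : (((l.map c).flatten).drop i).take 2 = [z, z])
    (he : i % m + 2 ≤ m) : i % m = m - 2 := by
  have hkc := flatten_codeword c m hlen (i / m) l hk
  have hshift := occ_shift ((l.map c).flatten) (c l[i / m]) m (m * (i / m)) (i % m) hkc he
  rw [Nat.div_add_mod i m, hP] at hshift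
  exact honly l[i / m] (i % m) he hshift

/-- Any occurrence of a codeword in a concatenation of codewords is at a
position divisible by `m`. -/
private lemma occ_mod (z : D) (c : Q → List D) (m : ℕ) (hm : 3 ≤ m)
    (hlen : ∀ q, (c q).length = m)
    (hsuf : ∀ q, (c q).drop (m - 2) = [z, z])
    (honly : ∀ q, ∀ i : ℕ, i + 2 ≤ m → ((c q).drop i).take 2 = [z, z] → i = m - 2)
    (l : List Q) (t : ℕ) (q : Q) (ht : t + m ≤ m * l.length)
    (hocc : (((l.map c).flatten).drop t).take m = c q) : t % m = 0 := by
  set w := (l.map c).flatten with hwdef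
  by_contra hd0
  have hdm : t % m < m := Nat.mod_lt _ (by omega)
  have hdam := Nat.div_add_mod t m
  have P1 : (w.drop (t + (m - 2))).take 2 = [z, z] :=
    suffix_occ z w (c q) m t hm hocc (hsuf q)
  rcases Nat.lt_or_ge (t % m) 2 with h2 | h2
  · -- t % m = 1
    have hd1 : t % m = 1 := by omega
    have hkl : t / m < l.length := by
      by_contra h
      push_neg at h
      have h3 : m * l.length ≤ m * (t / m) := Nat.mul_le_mul_left m h
      omega
    have hkc := flatten_codeword c m hlen (t / m) l hkl
    have Pb : (w.drop (t + (m - 3))).take 2 = [z, z] := by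
      have hb : t + (m - 3) = m * (t / m) + (m - 2) := by omega
      rw [hb]
      exact suffix_occ z w (c l[t / m]) m (m * (t / m)) hm hkc (hsuf _)
    have hsh := occ_shift w (c q) m t (m - 3) hocc (by omega)
    rw [Pb] at hsh
    have := honly q (m - 3) (by omega) hsh
    omega
  · -- 2 ≤ t % m
    have hmm' : m * (t / m + 1) = m * (t / m) + m := by ring
    have hi : (t + (m - 2)) % m = t % m - 2 := by
      have h3 : t + (m - 2) = m * (t / m + 1) + (t % m - 2) := by omega
      rw [h3, Nat.mul_add_mod, Nat.mod_eq_of_lt (by omega)]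
    have hkl : (t + (m - 2)) / m < l.length :=
      Nat.div_lt_of_lt_mul (by omega)
    have hzz := zz_mod z c m hm hlen honly l (t + (m - 2)) hkl P1 (by omega)
    omega

/-- Two multiples of `m` closer than `m` apart are equal. -/
private lemma mult_eq (m u v : ℕ) (hu : u % m = 0) (hv : v % m = 0)
    (h1 : u ≤ v) (h2 : v < u + m) : u = v := by
  have hd : m ∣ v - u :=
    Nat.dvd_sub (Nat.dvd_of_mod_eq_zero hv) (Nat.dvd_of_mod_eq_zero hu)
  rcases Nat.eq_zero_or_pos (v - u) with h | h
  · omega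
  · have := Nat.le_of_dvd h hd
    omega

end Aux

/-- Let `Q, D` be finite alphabets with `|D| ≥ 2` and a
distinguished letter `z ∈ D` (playing the role of `0`), and `m ≥ 3`. If every
codeword `[q]` (of length `m`) ends with the suffix `00` and the factor `00`
occurs in `[q]` at no other position, then the (injective) code `[·]` is
factor-decodable. -/
theorem factor_decodable_of_suffix_00 {Q D : Type} [Fintype Q] [Fintype D]
    (hD : 2 ≤ Fintype.card D) (z : D) (m : ℕ) (hm : 3 ≤ m)
    (c : Q → List D) (hinj : Function.Injective c)
    (hlen : ∀ q, (c q).length = m)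
    (hsuf : ∀ q, (c q).drop (m - 2) = [z, z])
    (honly : ∀ q, ∀ i : ℕ, i + 2 ≤ m → ((c q).drop i).take 2 = [z, z] → i = m - 2) :
    IsFactorDecodableCode m c := by
  refine ⟨⟨hinj, hlen⟩, ?_⟩
  intro l hl x hx hinf
  obtain ⟨sp, t, hw⟩ := hinf
  set w := (l.map c).flatten with hwdef
  set p := sp.length with hpdef
  have hwlen : w.length = m * l.length := flatten_length c m hlen l
  have hpw : p + (2 * m - 1) + t.length = w.length := by
    rw [← hw]
    simp [hx]
    omega
  have hL : 1 ≤ l.length := by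
    have := List.length_pos_iff.mpr hl
    omega
  have hmw : p + 2 * m - 1 ≤ m * l.length := by omega
  -- transfer factors of `x` to factors of `w`
  have htrans : ∀ a, a + m ≤ 2 * m - 1 →
      (x.drop a).take m = (w.drop (p + a)).take m := by
    intro a ha
    have h1 : w.drop (p + a) = x.drop a ++ t := by
      rw [← hw, List.append_assoc, List.drop_append,
        List.drop_eq_nil_of_le (show sp.length ≤ p + a by omega),
        List.nil_append, show p + a - sp.length = a by omega,
        List.drop_append,
        show a - x.length = 0 by omega, List.drop_zero]
    rw [h1, List.take_append,
      show m - (x.drop a).length = 0 by simp [hx]; omega, List.take_zero,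
      List.append_nil]
  -- find the unique codeword boundary in [p, p + m - 1]
  have hdam := Nat.div_add_mod p m
  obtain ⟨k0, hk0a, hk0b⟩ : ∃ k0, p ≤ m * k0 ∧ m * k0 ≤ p + (m - 1) := by
    rcases Nat.eq_zero_or_pos (p % m) with h | h
    · exact ⟨p / m, by omega, by omega⟩
    · have hmm' : m * (p / m + 1) = m * (p / m) + m := by ring
      have hpm : p % m < m := Nat.mod_lt _ (by omega)
      exact ⟨p / m + 1, by omega, by omega⟩
  have hk0l : k0 < l.length := by
    have h1 : m * (k0 + 1) = m * k0 + m := by ring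
    have h2 : m * (k0 + 1) ≤ m * l.length := by omega
    have := Nat.le_of_mul_le_mul_left h2 (show 0 < m by omega)
    omega
  -- any decoding position corresponds to the boundary `m * k0`
  have hA : ∀ j, (1 ≤ j ∧ j ≤ m ∧ ∃ q, (x.drop (j - 1)).take m = c q) →
      p + (j - 1) = m * k0 := by
    rintro j ⟨hj1, hjm, q, hq⟩
    have ht' : ((w.drop (p + (j - 1))).take m) = c q := by
      rw [← htrans (j - 1) (by omega)]
      exact hq
    have hmod0 : (p + (j - 1)) % m = 0 :=
      occ_mod z c m hm hlen hsuf honly l (p + (j - 1)) q (by omega) ht'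
    have hmod1 : (m * k0) % m = 0 := Nat.mul_mod_right m k0
    rcases le_total (p + (j - 1)) (m * k0) with h | h
    · exact mult_eq m _ _ hmod0 hmod1 h (by omega)
    · exact (mult_eq m _ _ hmod1 hmod0 h (by omega)).symm
  refine ⟨m * k0 - p + 1, ⟨by omega, by omega, ⟨l[k0]'hk0l, ?_⟩⟩, ?_⟩
  · rw [htrans (m * k0 - p + 1 - 1) (by omega),
      show p + (m * k0 - p + 1 - 1) = m * k0 by omega]
    exact flatten_codeword c m hlen k0 l hk0l
  · intro j hj
    have h1 := hA j hj
    have h2 := hj.1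
    omega
end

section
/- Let D be a finite alphabet of cardinality h ≥ 2 with a distinguished letter 0 ∈ D, and for m ≥ 2 let S(m) ⊆ D^m be the set of words ending with the suffix 00 in which the factor 00 occurs at no other position. Then for every integer n ≥ 2 with h < n, setting m = ⌈g(h) + f(h)·log₂ n⌉, one has |S(m)| ≥ n. -/
/-- The set `S(m) ⊆ D^m` of words of length `m` ending with the suffix `00`
(where `0` is the distinguished letter `z`) and in which the factor `00` occurs
at no other position. -/
def Sset {D : Type} (z : D) (m : ℕ) : Set (List D) :=
  {w | w.length = m ∧ w.drop (m - 2) = [z, z] ∧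
    ∀ i : ℕ, i + 2 ≤ m → (w.drop i).take 2 = [z, z] → i = m - 2}

/- ## Auxiliary combinatorics -/

/-- Count of words of length `k` over an alphabet of size `h` with no `00` factor
and not ending in `0`. -/
private def aSeq (h : ℕ) : ℕ → ℕ
  | 0 => 1
  | 1 => h - 1
  | (k+2) => (h - 1) * (aSeq h (k+1) + aSeq h k)

private lemma aSeq_zero (h : ℕ) : aSeq h 0 = 1 := rfl
private lemma aSeq_one (h : ℕ) : aSeq h 1 = h - 1 := rfl
private lemma aSeq_add_two (h k : ℕ) :
    aSeq h (k+2) = (h - 1) * (aSeq h (k+1) + aSeq h k) := rfl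

/-- A good word: does not end in `z` and has no `zz` factor. -/
private def Good {D : Type} (z : D) (w : List D) : Prop :=
  w.getLast? ≠ some z ∧ ∀ i : ℕ, w[i]? = some z → w[i+1]? ≠ some z

private lemma take2_eq {D : Type} (z : D) (l : List D) :
    l.take 2 = [z, z] ↔ l[0]? = some z ∧ l[1]? = some z := by
  match l with
  | [] => simp
  | [a] => simp
  | a :: b :: t => simp [List.take, and_assoc]

private lemma take_drop_eq {D : Type} (z : D) (w : List D) (i : ℕ)
    (h : (w.drop i).take 2 = [z, z]) : w[i]? = some z ∧ w[i+1]? = some z := by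
  rw [take2_eq] at h
  rwa [List.getElem?_drop, List.getElem?_drop, Nat.add_zero] at h

private lemma good_append {D : Type} (z : D) (u : List D) (hu : Good z u)
    (c : D) (hc : c ≠ z) : Good z (u ++ [c]) := by
  constructor
  · rw [List.getLast?_concat]
    simpa using hc
  · intro i h1 h2
    by_cases h3 : i + 1 < u.length
    · exact hu.2 i (by rwa [List.getElem?_append_left (by omega)] at h1)
        (by rwa [List.getElem?_append_left h3] at h2)
    by_cases h4 : i + 1 = u.length
    · apply hu.1
      rw [List.getLast?_eq_getElem?, show u.length - 1 = i by omega]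
      rwa [List.getElem?_append_left (by omega)] at h1
    · rw [List.getElem?_append_right (by omega)] at h2
      obtain ⟨j, hj⟩ : ∃ j, i + 1 - u.length = j + 1 := ⟨i - u.length, by omega⟩
      rw [hj] at h2
      simp at h2

private lemma good_append2 {D : Type} (z : D) (u : List D) (hu : Good z u)
    (c : D) (hc : c ≠ z) : Good z (u ++ [z, c]) := by
  constructor
  · rw [show u ++ [z, c] = (u ++ [z]) ++ [c] by simp, List.getLast?_concat]
    simpa using hc
  · intro i h1 h2
    by_cases h3 : i + 1 < u.length
    · exact hu.2 i (by rwa [List.getElem?_append_left (by omega)] at h1)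
        (by rwa [List.getElem?_append_left h3] at h2)
    by_cases h4 : i + 1 = u.length
    · apply hu.1
      rw [List.getLast?_eq_getElem?, show u.length - 1 = i by omega]
      rwa [List.getElem?_append_left (by omega)] at h1
    by_cases h5 : i = u.length
    · rw [List.getElem?_append_right (by omega),
        show i + 1 - u.length = 1 by omega] at h2
      simp at h2
      exact hc h2
    · rw [List.getElem?_append_right (by omega)] at h2
      obtain ⟨j, hj⟩ : ∃ j, i + 1 - u.length = j + 2 := ⟨i - 1 - u.length, by omega⟩
      rw [hj] at h2
      simp at h2

/-- The set of words of length `k` with no `zz` factor and not ending in `z`. -/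
private def Tset {D : Type} [Fintype D] [DecidableEq D] (z : D) : ℕ → Finset (List D)
  | 0 => {([] : List D)}
  | 1 => (Finset.univ.erase z).image (fun c => [c])
  | (k+2) =>
      ((Tset z (k+1)) ×ˢ (Finset.univ.erase z)).image (fun p => p.1 ++ [p.2]) ∪
      ((Tset z k) ×ˢ (Finset.univ.erase z)).image (fun p => p.1 ++ [z, p.2])

private lemma Tset_spec {D : Type} [Fintype D] [DecidableEq D] (z : D) :
    ∀ k, ∀ w ∈ Tset z k, w.length = k ∧ Good z w := by
  intro k
  induction k using Nat.strong_induction_on with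
  | _ k ih =>
    match k with
    | 0 =>
      intro w hw
      simp only [Tset, Finset.mem_singleton] at hw
      subst hw
      refine ⟨rfl, by simp [Good], ?_⟩
      intro i h1
      simp at h1
    | 1 =>
      intro w hw
      simp only [Tset, Finset.mem_image, Finset.mem_erase] at hw
      obtain ⟨c, ⟨hc, -⟩, rfl⟩ := hw
      refine ⟨rfl, ?_, ?_⟩
      · simpa using hc
      · intro i h1 h2
        have : ([c] : List D)[i+1]? = none := List.getElem?_eq_none (by simp)
        rw [this] at h2
        exact nomatch h2
    | (k+2) =>
      intro w hw
      simp only [Tset, Finset.mem_union, Finset.mem_image, Finset.mem_product,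
        Finset.mem_erase] at hw
      rcases hw with ⟨⟨u, c⟩, ⟨hu, hc, -⟩, rfl⟩ | ⟨⟨u, c⟩, ⟨hu, hc, -⟩, rfl⟩
      · obtain ⟨hlen, hgood⟩ := ih (k+1) (by omega) u hu
        exact ⟨by simp [hlen], good_append z u hgood c hc⟩
      · obtain ⟨hlen, hgood⟩ := ih k (by omega) u hu
        exact ⟨by simp [hlen], good_append2 z u hgood c hc⟩

private lemma Tset_card {D : Type} [Fintype D] [DecidableEq D] (z : D) :
    ∀ k, (Tset z k).card = aSeq (Fintype.card D) k := by
  intro k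
  induction k using Nat.strong_induction_on with
  | _ k ih =>
    match k with
    | 0 => simp [Tset, aSeq_zero]
    | 1 =>
      rw [show Tset z 1 = (Finset.univ.erase z).image (fun c => [c]) from rfl,
        Finset.card_image_of_injective _ (fun a b h => by simpa using h),
        Finset.card_erase_of_mem (Finset.mem_univ z), Finset.card_univ, aSeq_one]
    | (k+2) =>
      have hinj1 : Function.Injective (fun p : List D × D => p.1 ++ [p.2]) := by
        intro p q h
        obtain ⟨h1, h2⟩ := List.append_inj' h rfl
        exact Prod.ext h1 (by simpa using h2)
      have hinj2 : Function.Injective (fun p : List D × D => p.1 ++ [z, p.2]) := by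
        intro p q h
        obtain ⟨h1, h2⟩ := List.append_inj' h rfl
        simp only [List.cons.injEq, and_true] at h2
        exact Prod.ext h1 h2.2
      have hdis : Disjoint
          (((Tset z (k+1)) ×ˢ (Finset.univ.erase z)).image (fun p => p.1 ++ [p.2]))
          (((Tset z k) ×ˢ (Finset.univ.erase z)).image (fun p => p.1 ++ [z, p.2])) := by
        rw [Finset.disjoint_left]
        rintro w hw1 hw2
        simp only [Finset.mem_image, Finset.mem_product] at hw1 hw2
        obtain ⟨⟨u, c⟩, ⟨hu, -⟩, rfl⟩ := hw1
        obtain ⟨⟨v, d⟩, ⟨hv, -⟩, heq⟩ := hw2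
        obtain ⟨hulen, hugood⟩ := Tset_spec z (k+1) u hu
        obtain ⟨hvlen, -⟩ := Tset_spec z k v hv
        apply hugood.1
        have h1 : (u ++ [c])[k]? = u.getLast? := by
          rw [List.getElem?_append_left (by omega), List.getLast?_eq_getElem?, hulen]
          norm_num
        have h2 : (v ++ [z, d])[k]? = some z := by
          rw [List.getElem?_append_right (by omega), show k - v.length = 0 by omega]
          rfl
        rw [← h1, ← heq, h2]
      rw [show Tset z (k+2) =
          ((Tset z (k+1)) ×ˢ (Finset.univ.erase z)).image (fun p => p.1 ++ [p.2]) ∪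
          ((Tset z k) ×ˢ (Finset.univ.erase z)).image (fun p => p.1 ++ [z, p.2]) from rfl,
        Finset.card_union_of_disjoint hdis,
        Finset.card_image_of_injective _ hinj1, Finset.card_image_of_injective _ hinj2,
        Finset.card_product, Finset.card_product,
        Finset.card_erase_of_mem (Finset.mem_univ z), Finset.card_univ,
        ih (k+1) (by omega), ih k (by omega), aSeq_add_two]
      ring

private lemma le_ncard_Sset {D : Type} [Fintype D] [DecidableEq D] (z : D)
    (m : ℕ) (hm : 2 ≤ m) :
    aSeq (Fintype.card D) (m - 2) ≤ (Sset z m).ncard := by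
  classical
  have hinj : Function.Injective (fun u : List D => u ++ [z, z]) :=
    fun a b h => (List.append_inj' h rfl).1
  set F : Finset (List D) := (Tset z (m-2)).image (fun u => u ++ [z, z]) with hF
  have hsub : (F : Set (List D)) ⊆ Sset z m := by
    intro w hw
    simp only [hF, Finset.coe_image, Set.mem_image, Finset.mem_coe] at hw
    obtain ⟨u, hu, rfl⟩ := hw
    obtain ⟨hlen, hgood⟩ := Tset_spec z (m-2) u hu
    refine ⟨by simp [hlen]; omega, ?_, ?_⟩
    · rw [← hlen, List.drop_left]
    · intro i hi htake
      by_contra hne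
      obtain ⟨h1, h2⟩ := take_drop_eq z _ i htake
      by_cases h3 : i + 1 < m - 2
      · exact hgood.2 i
          (by rwa [List.getElem?_append_left (by omega : i < u.length)] at h1)
          (by rwa [List.getElem?_append_left (by omega : i + 1 < u.length)] at h2)
      · -- i + 1 = m - 2
        apply hgood.1
        rw [List.getLast?_eq_getElem?, hlen, show m - 2 - 1 = i by omega]
        rwa [List.getElem?_append_left (by omega : i < u.length)] at h1
  have hfin : (Sset z m).Finite :=
    (List.finite_length_eq D m).subset (fun w hw => hw.1)
  calc aSeq (Fintype.card D) (m - 2) = (Tset z (m-2)).card := (Tset_card z (m-2)).symm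
    _ = F.card := (Finset.card_image_of_injective _ hinj).symm
    _ = (F : Set (List D)).ncard := (Set.ncard_coe_finset F).symm
    _ ≤ (Sset z m).ncard := Set.ncard_le_ncard hsub hfin

/-- For every `n ≥ 2` with `h = |D| < n`, taking
`m = ⌈g(h) + f(h)·log₂ n⌉` one has `|S(m)| ≥ n`. -/
theorem Sset_card_ge {D : Type} [Fintype D] (z : D) (hh : 2 ≤ Fintype.card D) :
    ∀ n : ℕ, 2 ≤ n → Fintype.card D < n →
      n ≤ (Sset z ⌈gFun (Fintype.card D : ℝ) +
              fFun (Fintype.card D : ℝ) * Real.logb 2 (n : ℝ)⌉₊).ncard := by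
  classical
  intro n hn2 hcard
  set N := Fintype.card D with hN
  clear_value N
  have hD : (2:ℝ) ≤ (N : ℝ) := by exact_mod_cast hh
  have hnh : (N : ℝ) + 1 ≤ (n : ℝ) := by exact_mod_cast hcard
  obtain ⟨h, hhdef⟩ : ∃ r : ℝ, (N : ℝ) = r := ⟨_, rfl⟩
  rw [hhdef] at hD hnh ⊢
  have hcast1 : ((N - 1 : ℕ) : ℝ) = h - 1 := by
    rw [← hhdef, Nat.cast_sub (by omega), Nat.cast_one]
  obtain ⟨s, hsdef⟩ : ∃ r : ℝ, Real.sqrt ((h - 1) * (h + 3)) = r := ⟨_, rfl⟩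
  have hs0 : 0 ≤ s := hsdef ▸ Real.sqrt_nonneg _
  have hs2 : s ^ 2 = (h - 1) * (h + 3) := by
    rw [← hsdef]; exact Real.sq_sqrt (by nlinarith)
  have hs1 : 1 < s := by nlinarith
  have hsh : h - 1 ≤ s := by nlinarith
  have hsh' : s ≤ h + 1 := by nlinarith
  obtain ⟨x, hxdef⟩ : ∃ r : ℝ, (h - 1 + s) / 2 = r := ⟨_, rfl⟩
  obtain ⟨y, hydef⟩ : ∃ r : ℝ, (h - 1 - s) / 2 = r := ⟨_, rfl⟩
  have hx1 : 1 < x := by rw [← hxdef]; linarith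
  have hxh : x ≤ h := by rw [← hxdef]; linarith
  have hx0 : 0 < x := by linarith
  have hyneg1 : -1 ≤ y := by rw [← hydef]; linarith
  have hyneg2 : y ≤ 0 := by rw [← hydef]; linarith
  have hx2 : x ^ 2 = (h - 1) * x + (h - 1) := by
    rw [← hxdef]; linear_combination hs2 / 4
  have hy2 : y ^ 2 = (h - 1) * y + (h - 1) := by
    rw [← hydef]; linear_combination hs2 / 4
  -- closed form for aSeq
  have key : ∀ k : ℕ, (aSeq N k : ℝ) * s = x ^ (k+1) - y ^ (k+1) ∧
      (aSeq N (k+1) : ℝ) * s = x ^ (k+2) - y ^ (k+2) := by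
    intro k
    induction k with
    | zero =>
      constructor
      · rw [aSeq_zero, ← hxdef, ← hydef]; push_cast; ring
      · rw [aSeq_one, hcast1, ← hxdef, ← hydef]; ring
    | succ k ihk =>
      refine ⟨ihk.2, ?_⟩
      rw [aSeq_add_two, Nat.cast_mul, Nat.cast_add, hcast1]
      linear_combination (h - 1) * ihk.2 + (h - 1) * ihk.1 - x ^ (k+1) * hx2 + y ^ (k+1) * hy2
  -- analytic facts about f and g
  set G : ℝ := gFun h + fFun h * Real.logb 2 (n : ℝ) with hG
  set m := ⌈G⌉₊ with hm
  clear_value G m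
  have h2x : h - 1 + s = 2 * x := by rw [← hxdef]; ring
  have hf : fFun h = (Real.logb 2 x)⁻¹ := by
    rw [fFun, hsdef, h2x, Real.logb_mul two_ne_zero (ne_of_gt hx0),
      Real.logb_self_eq_one one_lt_two]
    ring_nf
  have hlx : 0 < Real.logb 2 x := Real.logb_pos one_lt_two hx1
  have hfpos : 0 < fFun h := by rw [hf]; positivity
  have hgf : gFun h = 1 + fFun h * Real.logb 2 s := by
    rw [gFun]
    have hl : Real.logb 2 (h - 1) + Real.logb 2 (h + 3) = 2 * Real.logb 2 s := by
      rw [← Real.logb_mul (by linarith) (by linarith), ← hs2,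
        show s ^ 2 = s * s by ring, Real.logb_mul (by linarith) (by linarith)]
      ring
    rw [hl]; ring
  have hn0 : (0:ℝ) < (n : ℝ) := by positivity
  have hGeq : G = 1 + fFun h * Real.logb 2 (s * n) := by
    rw [hG, hgf, Real.logb_mul (by linarith) (ne_of_gt hn0)]
    ring
  have hsn : x ^ 2 ≤ s * n := by
    have h1 : h ^ 2 ≤ s * (h + 1) := by
      have e1 : (h ^ 2) ^ 2 ≤ (s * (h + 1)) ^ 2 := by nlinarith [hs2, hD]
      exact (pow_le_pow_iff_left₀ (by positivity) (by positivity) two_ne_zero).mp e1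
    have h2 : s * (h + 1) ≤ s * n := by
      have : h + 1 ≤ (n : ℝ) := by linarith
      exact mul_le_mul_of_nonneg_left this hs0
    calc x ^ 2 ≤ h ^ 2 := pow_le_pow_left₀ hx0.le hxh 2
      _ ≤ s * (h + 1) := h1
      _ ≤ s * n := h2
  have hsnpos : 0 < s * n := by positivity
  have hm3 : 3 ≤ m := by
    have h1 : Real.logb 2 (x ^ 2) ≤ Real.logb 2 (s * n) :=
      Real.logb_le_logb_of_le one_lt_two (by positivity) hsn
    rw [Real.logb_pow] at h1
    have h2 : fFun h * ((2:ℕ) * Real.logb 2 x) = 2 := by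
      rw [hf]; push_cast; field_simp
    have h3 : (3:ℝ) ≤ G := by
      rw [hGeq]
      have := mul_le_mul_of_nonneg_left h1 hfpos.le
      rw [h2] at this
      linarith
    have h4 := Nat.ceil_mono h3
    rw [hm]
    simpa using h4
  have hmain : s * n ≤ x ^ (m - 1) := by
    have h1 : G ≤ (m : ℝ) := by rw [hm]; exact_mod_cast Nat.le_ceil G
    have h2 : fFun h * Real.logb 2 (s * n) ≤ (m : ℝ) - 1 := by
      rw [hGeq] at h1; linarith
    have h3 : Real.logb 2 (s * n) ≤ ((m : ℝ) - 1) * Real.logb 2 x := by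
      rw [hf] at h2
      calc Real.logb 2 (s * n)
          = (Real.logb 2 x)⁻¹ * Real.logb 2 (s * n) * Real.logb 2 x := by
            field_simp
        _ ≤ ((m : ℝ) - 1) * Real.logb 2 x := mul_le_mul_of_nonneg_right h2 hlx.le
    have h4 : Real.logb 2 (s * n) ≤ Real.logb 2 (x ^ (m - 1)) := by
      rw [Real.logb_pow, Nat.cast_sub (by omega : 1 ≤ m), Nat.cast_one]
      exact h3
    exact (Real.logb_le_logb one_lt_two hsnpos (by positivity)).mp h4
  -- conclude
  have hkey := (key (m - 2)).1
  rw [show m - 2 + 1 = m - 1 by omega] at hkey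
  have hy1 : y ^ (m - 1) ≤ 1 := by
    calc y ^ (m - 1) ≤ |y ^ (m - 1)| := le_abs_self _
      _ = |y| ^ (m - 1) := abs_pow y _
      _ ≤ 1 := pow_le_one₀ (abs_nonneg y) (abs_le.mpr ⟨hyneg1, hyneg2.trans zero_le_one⟩)
  have hstep : (n : ℝ) * s - 1 ≤ (aSeq N (m - 2) : ℝ) * s := by
    rw [hkey]; linarith [hmain, hy1]
  have hfin : (n : ℝ) < (aSeq N (m - 2) : ℝ) + 1 := by
    by_contra hcon
    push_neg at hcon
    have hmul : ((aSeq N (m - 2) : ℝ) + 1) * s ≤ (n : ℝ) * s :=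
      mul_le_mul_of_nonneg_right hcon hs0
    have hexp : (aSeq N (m - 2) : ℝ) * s + s ≤ (n : ℝ) * s := by linarith [hmul]
    linarith [hstep, hexp, hs1]
  have hfinN : n < aSeq N (m - 2) + 1 := by exact_mod_cast hfin
  have hle := le_ncard_Sset z m (by omega)
  rw [← hN] at hle
  exact le_trans (Nat.lt_succ_iff.mp hfinN) hle
end

section
/- The function g satisfies g(h) ≥ 2 for all real h ≥ 2, and lim_{h→∞} g(h) = 2. -/
open Real Filter


lemma gFun_setup (h : ℝ) (hh : 2 ≤ h) :
    0 < Real.logb 2 (h - 1 + Real.sqrt ((h - 1) * (h + 3))) - 1 ∧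
    2 * (Real.logb 2 (h - 1 + Real.sqrt ((h - 1) * (h + 3))) - 1) ≤
      Real.logb 2 (h - 1) + Real.logb 2 (h + 3) ∧
    Real.logb 2 (h - 1) ≤ Real.logb 2 (h - 1 + Real.sqrt ((h - 1) * (h + 3))) - 1 := by
  set a := h - 1 with ha'
  set b := h + 3 with hb'
  have ha : 1 ≤ a := by simp [ha']; linarith
  have hb : 5 ≤ b := by simp [hb']; linarith
  have hab : a < b := by simp [ha', hb']; linarith
  have ha0 : (0:ℝ) < a := by linarith
  have hb0 : (0:ℝ) < b := by linarith
  set r := Real.sqrt (a * b) with hr'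
  have hr0 : 0 < r := Real.sqrt_pos.2 (by positivity)
  have hra : a < r := by
    have h1 : a * a < a * b := by nlinarith
    have := Real.sqrt_lt_sqrt (by positivity) h1
    rwa [Real.sqrt_mul_self ha0.le] at this
  have hs0 : 0 < a + r := by linarith
  have hs2 : 2 < a + r := by linarith
  have h12 : (1:ℝ) < 2 := one_lt_two
  -- r * r = a * b
  have hrr : r * r = a * b := Real.mul_self_sqrt (by positivity)
  have hlogr : 2 * Real.logb 2 r = Real.logb 2 a + Real.logb 2 b := by
    rw [← Real.logb_mul ha0.ne' hb0.ne', ← hrr, Real.logb_mul hr0.ne' hr0.ne']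
    ring
  refine ⟨?_, ?_, ?_⟩
  · have := Real.logb_lt_logb h12 two_pos hs2
    rw [show Real.logb 2 2 = 1 from Real.logb_self_eq_one h12] at this
    linarith
  · -- a + r ≤ 2 * r
    have hle : a + r ≤ 2 * r := by linarith
    have := Real.logb_le_logb_of_le h12 hs0 hle
    have h2r : Real.logb 2 (2 * r) = 1 + Real.logb 2 r := by
      rw [Real.logb_mul two_ne_zero hr0.ne', Real.logb_self_eq_one h12]
    rw [h2r] at this
    linarith
  · -- 2 * a ≤ a + r
    have hle : 2 * a ≤ a + r := by linarith
    have := Real.logb_le_logb_of_le h12 (by linarith) hle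
    have h2a : Real.logb 2 (2 * a) = 1 + Real.logb 2 a := by
      rw [Real.logb_mul two_ne_zero ha0.ne', Real.logb_self_eq_one h12]
    rw [h2a] at this
    linarith

lemma gFun_ge (h : ℝ) (hh : 2 ≤ h) : 2 ≤ gFun h := by
  obtain ⟨hd, hN, _⟩ := gFun_setup h hh
  unfold gFun fFun
  set d := Real.logb 2 (h - 1 + Real.sqrt ((h - 1) * (h + 3))) - 1
  set N := Real.logb 2 (h - 1) + Real.logb 2 (h + 3)
  nlinarith [mul_le_mul_of_nonneg_left hN (le_of_lt (inv_pos.2 hd)),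
    mul_inv_cancel₀ hd.ne']

lemma gFun_le (h : ℝ) (hh : 3 ≤ h) :
    gFun h ≤ 3/2 + Real.log (h+3) / (2 * Real.log (h-1)) := by
  obtain ⟨hd, hN, hda⟩ := gFun_setup h (by linarith)
  have hla : 0 < Real.logb 2 (h-1) := by
    apply Real.logb_pos one_lt_two; linarith
  have hN0 : 0 ≤ Real.logb 2 (h-1) + Real.logb 2 (h+3) := by linarith
  unfold gFun fFun
  set d := Real.logb 2 (h - 1 + Real.sqrt ((h - 1) * (h + 3))) - 1
  set A := Real.logb 2 (h - 1)
  set B := Real.logb 2 (h + 3)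
  have hinv : d⁻¹ ≤ A⁻¹ := by
    exact inv_anti₀ hla hda
  have h1 : d⁻¹ / 2 * (A + B) ≤ A⁻¹ / 2 * (A + B) := by
    apply mul_le_mul_of_nonneg_right _ hN0
    linarith
  have h2 : A⁻¹ / 2 * (A + B) = 1/2 + B / (2 * A) := by
    field_simp [hla.ne']
  have h3 : B / (2 * A) = Real.log (h+3) / (2 * Real.log (h-1)) := by
    have hlog2 : Real.log 2 ≠ 0 := (Real.log_pos one_lt_two).ne'
    simp only [A, B, Real.logb, div_div]
    congr 1
    field_simp
  linarith [h1.trans_eq (h2.trans (by rw [h3]))]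


/-- `g(h) ≥ 2` for all real `h ≥ 2`, and `g(h) → 2` as
`h → ∞`. -/
theorem gFun_ge_two_and_limit :
    (∀ h : ℝ, 2 ≤ h → 2 ≤ gFun h) ∧
    Filter.Tendsto gFun Filter.atTop (nhds 2) := by
  refine ⟨gFun_ge, ?_⟩
  -- upper bound function tends to 2
  have hratio : Tendsto (fun h : ℝ => Real.log (h+3) / Real.log (h-1)) atTop (nhds 1) := by
    have hden : Tendsto (fun h : ℝ => Real.log (h-1)) atTop atTop :=
      Real.tendsto_log_atTop.comp (tendsto_atTop_add_const_right _ _ tendsto_id)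
    have hnum : Tendsto (fun h : ℝ => Real.log ((h+3)/(h-1))) atTop (nhds 0) := by
      have hq : Tendsto (fun h : ℝ => (h+3)/(h-1)) atTop (nhds 1) := by
        have : Tendsto (fun h : ℝ => 1 + 4/(h-1)) atTop (nhds (1 + 0)) := by
          apply Tendsto.const_add
          exact Tendsto.div_atTop tendsto_const_nhds
            (tendsto_atTop_add_const_right _ _ tendsto_id)
        rw [add_zero] at this
        apply this.congr'
        filter_upwards [eventually_gt_atTop (1:ℝ)] with h hh
        have hne : h - 1 ≠ 0 := sub_ne_zero.2 (by linarith)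
        field_simp [hne]
        ring
      have := (Real.continuousAt_log one_ne_zero).tendsto.comp hq
      rw [show (0:ℝ) = Real.log 1 from Real.log_one.symm]
      exact this
    have h0 : Tendsto (fun h : ℝ => Real.log ((h+3)/(h-1)) / Real.log (h-1)) atTop (nhds 0) :=
      Tendsto.div_atTop hnum hden
    have := (tendsto_const_nhds (x := (1:ℝ)) (f := atTop)).add h0
    rw [add_zero] at this
    apply this.congr'
    filter_upwards [eventually_gt_atTop (2:ℝ)] with h hh
    have hl : Real.log (h-1) ≠ 0 := by
      have : 0 < Real.log (h-1) := Real.log_pos (by linarith)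
      exact this.ne'
    rw [Real.log_div (by linarith) (by linarith)]
    field_simp
    ring
  have hupper : Tendsto (fun h : ℝ => 3/2 + Real.log (h+3) / (2 * Real.log (h-1)))
      atTop (nhds 2) := by
    have : Tendsto (fun h : ℝ => 3/2 + (Real.log (h+3) / Real.log (h-1)) / 2)
        atTop (nhds (3/2 + 1/2)) := by
      exact Tendsto.const_add _ (hratio.div_const 2)
    norm_num at this
    apply this.congr
    intro h
    ring
  apply tendsto_of_tendsto_of_tendsto_of_le_of_le' tendsto_const_nhds hupper
  · filter_upwards [eventually_ge_atTop (2:ℝ)] with h hh using gFun_ge h hh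
  · filter_upwards [eventually_ge_atTop (3:ℝ)] with h hh using gFun_le h hh
end
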